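/- arXiv:1304.2946 — 7 statements merged into one kernel-verified Lean document; each statement's English description precedes it below -/
import Mathlib

section
/- Let n = 2m. For any integers j with 0 ≤ j ≤ 2^m - 2 and k with 1 ≤ k ≤ 2^m, we have wt_n((2^m+1)(2^m-1-j) + (2^m-1)k) = n - wt_n((2^m+1)j + (2^m-1)k). -/
def f (x : ℕ) : ℕ := (Nat.digits 2 x).count 1

lemma f_two_mul (x : ℕ) : f (2*x) = f x := by
  rcases Nat.eq_zero_or_pos x with h | h
  · simp [f, h]
  · unfold f
    rw [Nat.digits_def' (by norm_num : 1 < 2) (by omega)]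
    simp [Nat.mul_div_cancel_left _ (by norm_num : 0 < 2), Nat.mul_mod_right]

lemma f_two_mul_add_one (x : ℕ) : f (2*x+1) = f x + 1 := by
  unfold f
  rw [Nat.digits_def' (by norm_num : 1 < 2) (by omega)]
  have h1 : (2*x+1) % 2 = 1 := by omega
  have h2 : (2*x+1) / 2 = x := by omega
  rw [h1, h2]
  simp

lemma f_compl : ∀ n r, r < 2^n → f r + f (2^n - 1 - r) = n := by
  intro n
  induction n with
  | zero => intro r hr; interval_cases r; simp [f]
  | succ n ih =>
    intro r hr
    have hp : 2^(n+1) = 2 * 2^n := by ring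
    rcases Nat.even_or_odd r with ⟨q, hq⟩ | ⟨q, hq⟩
    · have hq' : r = 2*q := by omega
      subst hq'
      have hqlt : q < 2^n := by omega
      have e2 : 2^(n+1) - 1 - 2*q = 2*(2^n - 1 - q) + 1 := by omega
      rw [e2, f_two_mul, f_two_mul_add_one]
      have := ih q hqlt
      omega
    · subst hq
      have hqlt : q < 2^n := by omega
      have e2 : 2^(n+1) - 1 - (2*q+1) = 2*(2^n - 1 - q) := by omega
      rw [e2, f_two_mul, f_two_mul_add_one]
      have := ih q hqlt
      omega

lemma f_split : ∀ (k a b : ℕ), b < 2^k → f (a * 2^k + b) = f a + f b := by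
  intro k
  induction k with
  | zero => intro a b hb; interval_cases b; simp [f]
  | succ k ih =>
    intro a b hb
    have hp : 2^(k+1) = 2 * 2^k := by ring
    rcases Nat.even_or_odd b with ⟨q, hq⟩ | ⟨q, hq⟩
    · have hq' : b = 2*q := by omega
      subst hq'
      have e : a * 2^(k+1) + 2*q = 2*(a*2^k + q) := by rw [hp]; ring
      rw [e, f_two_mul, f_two_mul, ih _ _ (by omega)]
    · subst hq
      have e : a * 2^(k+1) + (2*q+1) = 2*(a*2^k + q) + 1 := by rw [hp]; ring
      rw [e, f_two_mul_add_one, f_two_mul_add_one, ih _ _ (by omega)]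
      omega

lemma rot_eq' (A r : ℕ) (hA : 2 ≤ A) (hr : r < A * A - 1) :
    (A * r) % (A * A - 1) = (r % A) * A + r / A := by
  set q := r / A with hqd
  set b := r % A with hbd
  have hq : A * q + b = r := Nat.div_add_mod r A
  have hblt : b < A := Nat.mod_lt _ (by omega)
  have hr2 : (r:ℤ) + 2 ≤ (A:ℤ) * A := by
    have h1 : 1 ≤ A * A := by nlinarith
    have : r + 2 ≤ A * A := by omega
    exact_mod_cast this
  have hqz : (A:ℤ) * q + b = r := by exact_mod_cast hq
  have hbz : (b:ℤ) < A := by exact_mod_cast hblt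
  have hAz : (2:ℤ) ≤ A := by exact_mod_cast hA
  have hqlt : q < A := by
    by_contra h
    push_neg at h
    have hz : (A:ℤ) ≤ q := by exact_mod_cast h
    nlinarith
  have hqzlt : (q:ℤ) < A := by exact_mod_cast hqlt
  have hslt2 : (b:ℤ) * A + q + 2 ≤ (A:ℤ) * A := by
    rcases Nat.lt_or_ge (q+1) A with h | h
    · have hz : (q:ℤ) + 2 ≤ A := by exact_mod_cast h
      nlinarith [mul_nonneg (by linarith : (0:ℤ) ≤ (A:ℤ) - 1 - b) (by linarith : (0:ℤ) ≤ (A:ℤ))]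
    · have hq1 : (q:ℤ) = A - 1 := by
        have : A ≤ q + 1 := h
        have hz : (A:ℤ) ≤ (q:ℤ) + 1 := by exact_mod_cast this
        linarith
      have hb2 : (b:ℤ) ≤ A - 2 := by nlinarith
      nlinarith [mul_nonneg (by linarith : (0:ℤ) ≤ (A:ℤ) - 2 - b) (by linarith : (0:ℤ) ≤ (A:ℤ))]
  have hslt : b * A + q < A * A - 1 := by
    have h1 : b * A + q + 2 ≤ A * A := by exact_mod_cast hslt2
    omega
  have key : A * r = (A * A - 1) * q + (b * A + q) := by
    have h1 : 1 ≤ A * A := by nlinarith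
    zify [h1]
    linear_combination (-(A:ℤ)) * hqz
  rw [key, Nat.mul_add_mod, Nat.mod_eq_of_lt hslt]

/-- `wt n u`: the number of 1's in the binary expansion of the reduction of the
integer `u` modulo `2^n - 1`, taken in the residue system `{0, 1, ..., 2^n - 2}`. -/
def wt (n : ℕ) (u : ℤ) : ℕ :=
  (Nat.digits 2 ((u % ((2:ℤ)^n - 1)).toNat)).count 1

theorem stmt_1 (m : ℕ) (hm : 0 < m) (j k : ℤ)
    (hj0 : 0 ≤ j) (hj1 : j ≤ 2^m - 2) (hk0 : 1 ≤ k) (hk1 : k ≤ 2^m) :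
    wt (2*m) ((2^m + 1) * (2^m - 1 - j) + (2^m - 1) * k)
      = 2*m - wt (2*m) ((2^m + 1) * j + (2^m - 1) * k) := by
  set u : ℤ := (2^m + 1) * j + (2^m - 1) * k with hu
  set v : ℤ := (2^m + 1) * (2^m - 1 - j) + (2^m - 1) * k with hv
  set Ni : ℤ := (2:ℤ)^(2*m) - 1 with hNi
  -- basic facts
  set A : ℕ := 2^m with hAdef
  have hA2 : 2 ≤ A := by
    calc 2 = 2^1 := by norm_num
    _ ≤ 2^m := Nat.pow_le_pow_right (by norm_num) hm
  have hA2z : (2:ℤ) ≤ (2:ℤ)^m := by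
    calc (2:ℤ) = 2^1 := by norm_num
    _ ≤ 2^m := pow_le_pow_right₀ (by norm_num) hm
  have hAA : (2:ℤ)^(2*m) = (2:ℤ)^m * 2^m := by rw [two_mul, pow_add]
  have hAAn : (2:ℕ)^(2*m) = A * A := by rw [hAdef, two_mul, pow_add]
  have hAc : ((A:ℕ):ℤ) = (2:ℤ)^m := by push_cast [hAdef]; ring
  have h1AA : 1 ≤ A * A := by nlinarith
  have hNic : Ni = ((A * A - 1 : ℕ) : ℤ) := by
    rw [Nat.cast_sub h1AA, hNi, hAA]
    push_cast [hAc]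
    ring
  have hNpos : (0:ℤ) < Ni := by rw [hNi, hAA]; nlinarith
  -- N does not divide u
  have hndvd : ¬ (Ni ∣ u) := by
    rintro hdvd
    have h1 : ((2:ℤ)^m + 1) ∣ u := by
      refine dvd_trans ?_ hdvd
      exact ⟨(2:ℤ)^m - 1, by rw [hNi, hAA]; ring⟩
    have h2 : ((2:ℤ)^m + 1) ∣ (2^m - 1) * k := by
      have := h1
      rw [hu] at this
      have h3 : ((2:ℤ)^m + 1) ∣ (2^m + 1) * j := ⟨j, rfl⟩
      have h4 := this.sub h3
      have e : (2^m + 1) * j + (2^m - 1) * k - (2^m + 1) * j = (2^m - 1) * k := by ring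
      rwa [e] at h4
    have h5 : ((2:ℤ)^m + 1) ∣ 2 * k := by
      have h6 : ((2:ℤ)^m + 1) ∣ (2^m + 1) * k := ⟨k, rfl⟩
      have h7 := h6.sub h2
      have e : ((2:ℤ)^m + 1) * k - (2^m - 1) * k = 2 * k := by ring
      rwa [e] at h7
    obtain ⟨c, hc⟩ := h5
    have hc1 : c = 1 := by nlinarith
    rw [hc1, mul_one] at hc
    obtain ⟨d, hd⟩ : (2:ℤ) ∣ 2^m := dvd_pow_self 2 hm.ne'
    rw [hd] at hc
    omega
  -- the residue r of u
  set r : ℕ := (u % Ni).toNat with hrdef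
  have hru : ((r:ℕ):ℤ) = u % Ni := Int.toNat_of_nonneg (Int.emod_nonneg _ hNpos.ne')
  have hrpos : 0 < r := by
    rcases Nat.eq_zero_or_pos r with h | h
    · exfalso
      apply hndvd
      apply Int.dvd_of_emod_eq_zero
      rw [← hru, h]
      norm_num
    · exact h
  have hrlt : r < A * A - 1 := by
    have h1 : u % Ni < Ni := Int.emod_lt_of_pos _ hNpos
    rw [← hru, hNic] at h1
    exact_mod_cast h1
  -- s = rotation of r
  set s : ℕ := (A * r) % (A * A - 1) with hsdef
  have hs_eq : s = (r % A) * A + r / A := rot_eq' A r hA2 hrlt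
  have hs_lt : s < A * A - 1 := Nat.mod_lt _ (by omega)
  have hs_pos : 0 < s := by
    rcases Nat.eq_zero_or_pos s with h | h
    · exfalso
      rw [hs_eq] at h
      obtain ⟨h1, h2⟩ := Nat.add_eq_zero.mp h
      have h3 : r % A = 0 := by
        rcases Nat.mul_eq_zero.mp h1 with h4 | h4
        · exact h4
        · omega
      have h5 := Nat.div_add_mod r A
      rw [h2, h3] at h5
      simp at h5
      omega
    · exact h
  -- f s = f r
  have hfsr : f s = f r := by
    have hdivlt : r / A < 2^m := by
      rw [← hAdef]
      exact Nat.div_lt_of_lt_mul (by omega)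
    have hmodlt : r % A < 2^m := by rw [← hAdef]; exact Nat.mod_lt _ (by omega)
    have h1 : f s = f (r % A) + f (r / A) := by
      rw [hs_eq, hAdef]
      exact f_split m _ _ hdivlt
    have h2 : f r = f (r / A) + f (r % A) := by
      have hr' : (r / A) * A + r % A = r := by
        rw [mul_comm]; exact Nat.div_add_mod r A
      conv_lhs => rw [← hr']
      rw [hAdef]
      exact f_split m _ _ hmodlt
    omega
  -- congruence v ≡ -(2^m * u) mod Ni
  have hveq : v % Ni = (-((2:ℤ)^m * u)) % Ni := by
    have : v ≡ -((2:ℤ)^m * u) [ZMOD Ni] :=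
      Int.modEq_iff_dvd.mpr ⟨-(1 + j + k), by rw [hv, hu, hNi, hAA]; ring⟩
    exact this
  -- (2^m * u) % Ni = s
  have h2mu : ((2:ℤ)^m * u) % Ni = (s:ℤ) := by
    have hmod : ((2:ℤ)^m * u) % Ni = ((2:ℤ)^m * (r:ℤ)) % Ni := by
      have h1 : u ≡ (r:ℤ) [ZMOD Ni] := by
        show u % Ni = (r:ℤ) % Ni
        rw [hru, Int.emod_emod_of_dvd _ dvd_rfl]
      exact h1.mul_left ((2:ℤ)^m)
    rw [hmod, ← hAc, hNic, ← Nat.cast_mul, hsdef, Int.natCast_mod]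
  -- (-(2^m u)) % Ni = Ni - s
  have hneg : (-((2:ℤ)^m * u)) % Ni = Ni - (s:ℤ) := by
    have hd := Int.mul_ediv_add_emod ((2:ℤ)^m * u) Ni
    rw [h2mu] at hd
    set d : ℤ := (2:ℤ)^m * u / Ni with hddef
    have e : -((2:ℤ)^m * u) = (Ni - (s:ℤ)) + Ni * (-d - 1) := by linarith
    rw [e, Int.add_mul_emod_self_left]
    apply Int.emod_eq_of_lt
    · have : (s:ℤ) < Ni := by
        rw [hNic]; exact_mod_cast hs_lt
      linarith
    · have : (0:ℤ) < (s:ℤ) := by exact_mod_cast hs_pos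
      linarith
  -- conclude
  have hwv : wt (2*m) v = f ((A*A - 1) - s) := by
    show f ((v % Ni).toNat) = f ((A*A - 1) - s)
    rw [hveq, hneg, hNic]
    congr 1
    rw [← Nat.cast_sub (by omega : s ≤ A*A - 1)]
    exact Int.toNat_natCast _
  have hwu : wt (2*m) u = f r := rfl
  rw [hwv, hwu, ← hfsr]
  have hcompl := f_compl (2*m) s (by rw [hAAn]; omega)
  rw [hAAn] at hcompl
  omega
end

section
/- Let n = 2m. For any integer k with 1 ≤ k ≤ 2^m, wt_n((2^m - 1)k) = m. -/
/-- weight of 2x+r is weight of x plus r, for r < 2 -/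
lemma count_two_mul_add (x r : ℕ) (hr : r < 2) :
    (Nat.digits 2 (2 * x + r)).count 1 = (Nat.digits 2 x).count 1 + r := by
  rcases Nat.eq_zero_or_pos (2 * x + r) with h | h
  · have hx : x = 0 := by omega
    have hr0 : r = 0 := by omega
    simp [hx, hr0]
  · rw [Nat.digits_def' (by norm_num : 1 < 2) h]
    have h1 : (2 * x + r) % 2 = r := by omega
    have h2 : (2 * x + r) / 2 = x := by omega
    rw [h1, h2, List.count_cons]
    interval_cases r <;> simp [add_comm]

/-- complementary weights sum to m -/
lemma count_compl (m : ℕ) : ∀ a, a < 2^m →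
    (Nat.digits 2 a).count 1 + (Nat.digits 2 (2^m - 1 - a)).count 1 = m := by
  induction m with
  | zero => intro a ha; interval_cases a; simp
  | succ n ih =>
    intro a ha
    have hb : a / 2 < 2^n := by
      have : 2^(n+1) = 2 * 2^n := by ring
      omega
    have h1 : a = 2 * (a / 2) + a % 2 := by omega
    have h2 : 2^(n+1) - 1 - a = 2 * (2^n - 1 - a/2) + (1 - a % 2) := by
      have : 2^(n+1) = 2 * 2^n := by ring
      omega
    rw [h2, count_two_mul_add _ _ (by omega)]
    nth_rewrite 1 [h1]
    rw [count_two_mul_add _ _ (by omega)]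
    have := ih (a/2) hb
    omega

lemma count_split (m a : ℕ) (ha : a < 2^m) :
    (Nat.digits 2 (2^m - 1 - a + 2^m * a)).count 1 = m := by
  rcases Nat.eq_zero_or_pos a with rfl | hpos
  · have := count_compl m 0 (Nat.two_pow_pos m)
    simpa using this
  · have hlow : 2^m - 1 - a < 2^m := by omega
    have hlen : (Nat.digits 2 (2^m - 1 - a)).length ≤ m := by
      rcases eq_or_ne (2^m - 1 - a) 0 with h0 | h0
      · simp [h0]
      · rw [Nat.digits_len 2 _ one_lt_two h0]
        have := Nat.log_lt_of_lt_pow h0 hlow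
        omega
    have := Nat.digits_append_zeroes_append_digits
      (b := 2) (k := m - (Nat.digits 2 (2^m - 1 - a)).length)
      (m := a) (n := 2^m - 1 - a) one_lt_two hpos
    rw [show (Nat.digits 2 (2^m - 1 - a)).length +
        (m - (Nat.digits 2 (2^m - 1 - a)).length) = m from by omega] at this
    rw [← this, List.count_append, List.count_append, List.count_replicate]
    norm_num
    have := count_compl m a ha
    omega

theorem stmt_3 (m : ℕ) (hm : 0 < m) (k : ℤ) (hk0 : 1 ≤ k) (hk1 : k ≤ 2^m) :
    wt (2*m) ((2^m - 1) * k) = m := by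
  unfold wt
  have h2m : (2:ℤ)^(2*m) = 2^m * 2^m := by rw [two_mul, pow_add]
  have hpm : (2:ℤ) ≤ 2^m := by
    calc (2:ℤ) = 2^1 := by norm_num
    _ ≤ 2^m := pow_le_pow_right₀ (by norm_num) hm
  have hge : 0 ≤ ((2:ℤ)^m - 1) * k := mul_nonneg (by linarith) (by linarith)
  have hlt : ((2:ℤ)^m - 1) * k < 2^(2*m) - 1 := by
    rw [h2m]; nlinarith
  rw [Int.emod_eq_of_lt hge hlt]
  set a : ℕ := (k - 1).toNat with hadef
  have hka : k = (a : ℤ) + 1 := by omega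
  have ham : a < 2^m := by
    have : ((a : ℤ) + 1) ≤ 2^m := hka ▸ hk1
    have h2 : ((2:ℕ)^m : ℤ) = (2:ℤ)^m := by push_cast; ring
    omega
  have key : (((2:ℤ)^m - 1) * k).toNat = 2^m - 1 - a + 2^m * a := by
    have : ((2:ℤ)^m - 1) * k = ((2^m - 1 - a + 2^m * a : ℕ) : ℤ) := by
      push_cast [Nat.cast_sub (by omega : a ≤ 2^m - 1), Nat.cast_sub (Nat.one_le_two_pow : 1 ≤ 2^m)]
      rw [hka]; push_cast; ring
    rw [this, Int.toNat_natCast]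
  rw [key]
  exact count_split m a ham
end

section
/- Let n = 2m. The number of residues j in Z/(2^m - 1)Z such that wt_n((2^m + 1)j) < m equals 2^{m-1} if m is odd, and equals 2^{m-1} - (1/2)·C(m, m/2) if m is even. (Here wt_n((2^m+1)j) = 2·wt_m(j).) -/
open Finset

lemma pc_add_pow_mul : ∀ (m a b : ℕ), a < 2^m →
    (Nat.digits 2 (a + 2^m * b)).count 1 =
      (Nat.digits 2 a).count 1 + (Nat.digits 2 b).count 1 := by
  intro m
  induction m with
  | zero => intro a b h; interval_cases a; simp
  | succ m ih =>
    intro a b h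
    rcases Nat.eq_zero_or_pos (a + 2^(m+1) * b) with h0 | h0
    · have hb : 2^(m+1) * b = 0 := by omega
      have hb' : b = 0 := by
        have : 0 < 2^(m+1) := Nat.pow_pos (by norm_num)
        exact by rcases Nat.mul_eq_zero.mp hb with h|h; omega; exact h
      have ha : a = 0 := by omega
      simp [ha, hb']
    · have key : a + 2^(m+1) * b = a + 2 * (2^m * b) := by ring
      have hmod : (a + 2^(m+1) * b) % 2 = a % 2 := by omega
      have hdiv : (a + 2^(m+1) * b) / 2 = a / 2 + 2^m * b := by omega
      have ha2 : a / 2 < 2^m := by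
        have : (2:ℕ)^(m+1) = 2 * 2^m := by ring
        omega
      rw [Nat.digits_def' (show (1:ℕ) < 2 by norm_num) h0, hmod, hdiv]
      rcases Nat.eq_zero_or_pos a with haz | hap
      · have h1 := ih 0 b (Nat.pow_pos (by norm_num))
        simp only [Nat.zero_add] at h1
        simp [haz, List.count_cons, h1]
      · rw [Nat.digits_def' (show (1:ℕ) < 2 by norm_num) hap]
        simp [List.count_cons, ih _ b ha2]
        omega

lemma card_bitcount (m : ℕ) : ∀ k : ℕ,
    ((Finset.range (2^m)).filter (fun j => (Nat.digits 2 j).count 1 = k)).card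
      = m.choose k := by
  induction m with
  | zero =>
    intro k
    rcases Nat.eq_zero_or_pos k with rfl | hk
    · simp [Finset.filter_singleton]
    · rw [Nat.choose_eq_zero_of_lt (by omega)]
      simp only [pow_zero, Finset.range_one]
      rw [Finset.card_eq_zero, Finset.filter_eq_empty_iff]
      intro x hx
      simp at hx
      simp [hx]
      omega
  | succ m ih =>
    intro k
    have hsplit : (2:ℕ)^(m+1) = 2^m + 2^m := by ring
    rw [hsplit, Finset.range_add, Finset.filter_union,
      Finset.card_union_of_disjoint, Finset.filter_map, Finset.card_map]
    · simp only [Function.comp_def, addLeftEmbedding_apply]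
      have hc : ∀ i < 2^m,
          (Nat.digits 2 (2^m + i)).count 1 = (Nat.digits 2 i).count 1 + 1 := by
        intro i hi
        have := pc_add_pow_mul m i 1 hi
        simp only [mul_one] at this
        rw [Nat.add_comm, this]
        norm_num
      rcases Nat.eq_zero_or_pos k with rfl | hk
      · rw [ih 0]
        have : ((Finset.range (2^m)).filter
            (fun i => (Nat.digits 2 (2^m + i)).count 1 = 0)).card = 0 := by
          rw [Finset.card_eq_zero, Finset.filter_eq_empty_iff]
          intro x hx
          rw [hc x (Finset.mem_range.mp hx)]
          omega
        rw [this]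
        simp
      · obtain ⟨k', rfl⟩ := Nat.exists_eq_add_of_le hk
        rw [Nat.add_comm 1 k']
        have : ((Finset.range (2^m)).filter
            (fun i => (Nat.digits 2 (2^m + i)).count 1 = k' + 1)).card
            = m.choose k' := by
          rw [← ih k']
          congr 1
          apply Finset.filter_congr
          intro x hx
          rw [hc x (Finset.mem_range.mp hx)]
          omega
        rw [this, ih (k'+1), Nat.choose_succ_succ']
        omega
    · apply Finset.disjoint_filter_filter
      rw [Finset.disjoint_left]
      intro x hx hx2
      simp only [Finset.mem_map, addLeftEmbedding_apply] at hx2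
      obtain ⟨i, hi, rfl⟩ := hx2
      have := Finset.mem_range.mp hx
      omega

lemma card_bitcount_le (m t : ℕ) :
    ((Finset.range (2^m)).filter (fun j => (Nat.digits 2 j).count 1 ≤ t)).card
      = ∑ k ∈ Finset.range (t+1), m.choose k := by
  induction t with
  | zero =>
    rw [Finset.sum_range_one, ← card_bitcount m 0]
    congr 1
    apply Finset.filter_congr
    intro x _
    exact Nat.le_zero
  | succ t ih =>
    rw [Finset.sum_range_succ, ← ih, ← card_bitcount m (t+1),
      ← Finset.card_union_of_disjoint]
    · congr 1
      rw [← Finset.filter_or]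
      apply Finset.filter_congr
      intro x _
      constructor <;> (intro h; omega)
    · rw [Finset.disjoint_left]
      intro x hx hx2
      have h1 := (Finset.mem_filter.mp hx).2
      have h2 := (Finset.mem_filter.mp hx2).2
      omega

lemma sum_choose_even (n : ℕ) (hn : 0 < n) :
    ∑ k ∈ Finset.range n, (2*n).choose k = 2^(2*n-1) - (2*n).choose n / 2 := by
  obtain ⟨p, rfl⟩ : ∃ p, n = p + 1 := ⟨n-1, by omega⟩
  have htot : ∑ i ∈ Finset.range (2*(p+1)+1), (2*(p+1)).choose i = 2^(2*(p+1)) :=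
    Nat.sum_range_choose (2*(p+1))
  have hsplit : ∑ i ∈ Finset.range (p+2), (2*(p+1)).choose i
      + ∑ i ∈ Finset.Ico (p+2) (2*(p+1)+1), (2*(p+1)).choose i
      = ∑ i ∈ Finset.range (2*(p+1)+1), (2*(p+1)).choose i :=
    Finset.sum_range_add_sum_Ico _ (by omega)
  have hrefl : ∑ i ∈ Finset.Ico (p+2) (2*(p+1)+1), (2*(p+1)).choose i
      = ∑ k ∈ Finset.range (p+1), (2*(p+1)).choose k := by
    rw [Finset.sum_Ico_eq_sum_range]
    have h1 : 2*(p+1)+1 - (p+2) = p+1 := by omega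
    rw [h1, ← Finset.sum_range_reflect (fun j => (2*(p+1)).choose j) (p+1)]
    apply Finset.sum_congr rfl
    intro j hj
    have hj' := Finset.mem_range.mp hj
    rw [← Nat.choose_symm (show p+2+j ≤ 2*(p+1) by omega)]
    congr 1
    omega
  have hS : ∑ i ∈ Finset.range (p+2), (2*(p+1)).choose i
      = (∑ k ∈ Finset.range (p+1), (2*(p+1)).choose k) + (2*(p+1)).choose (p+1) :=
    Finset.sum_range_succ _ (p+1)
  have hcent : (2*(p+1)).choose (p+1) = 2 * (2*p+1).choose p := by
    have h2 : 2*(p+1) = (2*p+1)+1 := by ring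
    rw [h2, Nat.choose_succ_succ]
    have h3 : (2*p+1).choose (p+1) = (2*p+1).choose p := by
      rw [← Nat.choose_symm (show p+1 ≤ 2*p+1 by omega)]
      congr 1
      omega
    simp only [Nat.succ_eq_add_one] at *
    omega
  have hp : (2:ℕ)^(2*(p+1)) = 2 * 2^(2*(p+1)-1) := by
    have h4 : 2*(p+1)-1 = 2*p+1 := by omega
    have h5 : 2*(p+1) = (2*p+1)+1 := by omega
    rw [h4, h5, pow_succ]
    ring
  omega

lemma pc_pow_sub_one (m : ℕ) : (Nat.digits 2 (2^m - 1)).count 1 = m := by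
  induction m with
  | zero => simp
  | succ m ih =>
    have h2 : (2:ℕ)^(m+1) = 2 * 2^m := by ring
    have h1 : (1:ℕ) ≤ 2^m := Nat.one_le_two_pow
    have h : 2^(m+1) - 1 = (2^m - 1) + 2^m * 1 := by omega
    rw [h, pc_add_pow_mul m _ 1 (by omega), ih]
    simp

lemma wt_eq (m : ℕ) (hm : 0 < m) (j : ℕ) (hj : j < 2^m - 1) :
    wt (2*m) ((2^m + 1) * (j:ℤ)) = 2 * (Nat.digits 2 j).count 1 := by
  unfold wt
  have h1 : ((2:ℤ)^m + 1) * (j:ℤ) = (((2^m + 1) * j : ℕ) : ℤ) := by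
    push_cast
    ring
  have h1' : (1:ℕ) ≤ 2^(2*m) := Nat.one_le_two_pow
  have hb : ((2:ℤ)^(2*m) - 1) = ((2^(2*m) - 1 : ℕ) : ℤ) := by
    push_cast [h1']
    ring
  rw [h1, hb, ← Int.natCast_mod, Int.toNat_natCast]
  have h2m : (2:ℕ) ≤ 2^m := by
    calc (2:ℕ) = 2^1 := by norm_num
      _ ≤ 2^m := Nat.pow_le_pow_right (by norm_num) hm
  obtain ⟨q, hq⟩ : ∃ q, 2^m = q + 2 := ⟨2^m - 2, by omega⟩
  have hpow : (2:ℕ)^(2*m) = 2^m * 2^m := by rw [two_mul, pow_add]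
  have e0 : (2^m+1)*j = (q+3)*j := by rw [hq]
  have e1 : (q+3)*j ≤ (q+3)*q := Nat.mul_le_mul_left _ (by omega)
  have e2 : (q+3)*q = q*q+3*q := by ring
  have e3 : (2:ℕ)^(2*m) = q*q+4*q+4 := by rw [hpow, hq]; ring
  have hlt : (2^m+1)*j < 2^(2*m)-1 := by omega
  rw [Nat.mod_eq_of_lt hlt, show (2^m+1)*j = j + 2^m*j from by ring,
    pc_add_pow_mul m j j (by omega)]
  omega

theorem stmt_4 (m : ℕ) (hm : 0 < m) :
    ((Finset.range (2^m - 1)).filter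
        (fun j : ℕ => wt (2*m) ((2^m + 1) * (j : ℤ)) < m)).card =
      if Odd m then 2^(m-1) else 2^(m-1) - (m.choose (m/2)) / 2 := by
  have hcond : ∀ j ∈ Finset.range (2^m - 1),
      (wt (2*m) ((2^m + 1) * (j:ℤ)) < m ↔ (Nat.digits 2 j).count 1 ≤ (m-1)/2) := by
    intro j hj
    rw [wt_eq m hm j (Finset.mem_range.mp hj)]
    omega
  rw [Finset.filter_congr hcond]
  have h1 : (1:ℕ) ≤ 2^m := Nat.one_le_two_pow
  have hnot : ¬ ((Nat.digits 2 (2^m - 1)).count 1 ≤ (m-1)/2) := by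
    rw [pc_pow_sub_one]
    omega
  have hins : Finset.range (2^m) = insert (2^m - 1) (Finset.range (2^m - 1)) := by
    rw [← Finset.range_add_one]
    congr 1
    omega
  have hext : ((Finset.range (2^m - 1)).filter
        (fun j => (Nat.digits 2 j).count 1 ≤ (m-1)/2)).card
      = ((Finset.range (2^m)).filter
        (fun j => (Nat.digits 2 j).count 1 ≤ (m-1)/2)).card := by
    rw [hins, Finset.filter_insert, if_neg hnot]
  rw [hext, card_bitcount_le m ((m-1)/2)]
  by_cases hodd : Odd m
  · rw [if_pos hodd]
    obtain ⟨n, rfl⟩ := hodd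
    have he : (2*n+1-1)/2 = n := by omega
    rw [he, Nat.sum_range_choose_halfway n]
    have h4 : (4:ℕ) = 2^2 := by norm_num
    have hexp : 2*n+1-1 = 2*n := by omega
    rw [h4, ← pow_mul, hexp]
  · rw [if_neg hodd]
    have heven : ∃ n, m = 2*n ∧ 0 < n := by
      rcases Nat.even_or_odd m with he | ho
      · obtain ⟨n, hn⟩ := he
        exact ⟨n, by omega, by omega⟩
      · exact absurd ho hodd
    obtain ⟨n, rfl, hn⟩ := heven
    have he : (2*n-1)/2 = n - 1 := by omega
    have he2 : (n-1) + 1 = n := by omega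
    have he3 : 2*n/2 = n := by omega
    rw [he, he2, sum_choose_even n hn, he3]
end

section
/- Let n = 2m. For each integer k with 0 ≤ k ≤ 2^m, define S_k = { j ∈ Z/(2^m - 1)Z : wt_n((2^m+1)j + (2^m-1)k) < m }. Then |S_k| ≤ 2^{m-1}, and equality holds if and only if m is odd and k = 0. -/
def bc (v : ℕ) : ℕ := (Nat.digits 2 v).count 1

lemma bc_rec (v : ℕ) : bc v = v % 2 + bc (v / 2) := by
  rcases Nat.eq_zero_or_pos v with h | h
  · simp [h, bc]
  · unfold bc
    rw [Nat.digits_def' (by norm_num) h, List.count_cons]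
    rcases Nat.mod_two_eq_zero_or_one v with h2 | h2 <;> simp [h2] <;> omega

lemma bc_split (s : ℕ) : ∀ a b : ℕ, a < 2^s → bc (a + 2^s * b) = bc a + bc b := by
  induction s with
  | zero => intro a b ha; interval_cases a; simp [bc]
  | succ s ih =>
    intro a b ha
    rw [bc_rec (a + 2^(s+1) * b), bc_rec a]
    have hb : 2^(s+1) * b = 2 * (2^s * b) := by ring
    have h1 : (a + 2^(s+1) * b) % 2 = a % 2 := by omega
    have h2 : (a + 2^(s+1) * b) / 2 = a / 2 + 2^s * b := by omega
    rw [h1, h2, ih (a/2) b (by omega)]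
    omega

lemma bc_compl (n : ℕ) : ∀ v : ℕ, v < 2^n → bc v + bc (2^n - 1 - v) = n := by
  induction n with
  | zero => intro v hv; interval_cases v; simp [bc]
  | succ n ih =>
    intro v hv
    rw [bc_rec v, bc_rec (2^(n+1) - 1 - v)]
    have hp : 2^(n+1) = 2 * 2^n := by ring
    have h1 : (2^(n+1) - 1 - v) / 2 = 2^n - 1 - v / 2 := by omega
    have h2 : v % 2 + (2^(n+1) - 1 - v) % 2 = 1 := by omega
    rw [h1]
    have := ih (v / 2) (by omega)
    omega

lemma bc_two_mul_mod (n : ℕ) (hn : 0 < n) (v : ℕ) (hv : v < 2^n - 1) :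
    bc ((2*v) % (2^n - 1)) = bc v := by
  have hp : 2^n = 2 * 2^(n-1) := by
    rw [← pow_succ']; congr 1; omega
  by_cases h : 2*v < 2^n - 1
  · rw [Nat.mod_eq_of_lt h, bc_rec (2*v)]
    have e1 : (2*v) % 2 = 0 := by omega
    have e2 : (2*v) / 2 = v := by omega
    rw [e1, e2]; omega
  · have hmod : (2*v) % (2^n - 1) = 2*v - (2^n - 1) := by
      rw [Nat.mod_eq_sub_mod (by omega), Nat.mod_eq_of_lt (by omega)]
    set w := v - 2^(n-1) with hw
    have hval : 2*v - (2^n - 1) = 2*w + 1 := by omega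
    have hvw : v = w + 2^(n-1) * 1 := by omega
    rw [hmod, hval, bc_rec (2*w+1)]
    have e1 : (2*w+1) % 2 = 1 := by omega
    have e2 : (2*w+1)/2 = w := by omega
    have hb1 : bc 1 = 1 := by rw [bc_rec]; simp [bc]
    rw [e1, e2]
    conv_rhs => rw [hvw]
    rw [bc_split (n-1) w 1 (by omega), hb1]
    omega

lemma wt_eq_bc (n : ℕ) (u : ℤ) : wt n u = bc ((u % ((2:ℤ)^n - 1)).toNat) := rfl

lemma two_pow_cast (n : ℕ) : ((2^n - 1 : ℕ) : ℤ) = (2:ℤ)^n - 1 := by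
  have h : (1:ℕ) ≤ 2^n := Nat.one_le_two_pow
  rw [Nat.cast_sub h]; push_cast; ring

lemma M_pos (n : ℕ) (hn : 0 < n) : (0:ℤ) < 2^n - 1 := by
  have h2 : (2:ℤ)^1 ≤ 2^n := pow_le_pow_right₀ (by norm_num) hn
  simp at h2; linarith

lemma wt_two_mul (n : ℕ) (hn : 0 < n) (u : ℤ) : wt n (2 * u) = wt n u := by
  have hM : (0:ℤ) < 2^n - 1 := M_pos n hn
  set M : ℤ := 2^n - 1 with hMdef
  set v : ℕ := (u % M).toNat with hv
  have h0 : 0 ≤ u % M := Int.emod_nonneg u (ne_of_gt hM)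
  have h1 : u % M < M := Int.emod_lt_of_pos u hM
  have hveq : (v : ℤ) = u % M := Int.toNat_of_nonneg h0
  have hc := two_pow_cast n
  have hvlt : v < 2^n - 1 := by omega
  have key : (2 * u) % M = (((2 * v) % (2^n - 1) : ℕ) : ℤ) := by
    have h3 : (2*u) % M = (2 * (v:ℤ)) % M := by
      have huv : u ≡ (v:ℤ) [ZMOD M] := by
        unfold Int.ModEq
        rw [hveq, Int.emod_emod_of_dvd u dvd_rfl]
      exact Int.ModEq.mul_left 2 huv
    rw [h3, show (2*(v:ℤ)) = ((2*v : ℕ) : ℤ) by push_cast; ring,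
      show M = ((2^n - 1 : ℕ) : ℤ) from hc.symm]
    exact (Int.natCast_mod _ _).symm
  rw [wt_eq_bc, wt_eq_bc, ← hMdef, key, Int.toNat_natCast, bc_two_mul_mod n hn v hvlt]

lemma wt_two_pow_mul (n : ℕ) (hn : 0 < n) (s : ℕ) (u : ℤ) :
    wt n (2^s * u) = wt n u := by
  induction s with
  | zero => simp
  | succ s ih =>
    have : (2:ℤ)^(s+1) * u = 2 * (2^s * u) := by ring
    rw [this, wt_two_mul n hn, ih]

lemma wt_congr (n : ℕ) (u u' : ℤ) (h : ((2:ℤ)^n - 1) ∣ (u - u')) : wt n u = wt n u' := by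
  have h2 : u ≡ u' [ZMOD ((2:ℤ)^n - 1)] := Int.modEq_iff_dvd.mpr (by simpa using dvd_neg.mpr h)
  unfold wt
  rw [show u % ((2:ℤ)^n - 1) = u' % ((2:ℤ)^n - 1) from h2]

lemma wt_add_neg (n : ℕ) (hn : 0 < n) (u : ℤ) (h : u % ((2:ℤ)^n - 1) ≠ 0) :
    wt n u + wt n (-u) = n := by
  have hM : (0:ℤ) < 2^n - 1 := M_pos n hn
  set M : ℤ := 2^n - 1 with hMdef
  set v : ℕ := (u % M).toNat with hv
  have h0 : 0 ≤ u % M := Int.emod_nonneg u (ne_of_gt hM)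
  have h1 : u % M < M := Int.emod_lt_of_pos u hM
  have hveq : (v : ℤ) = u % M := Int.toNat_of_nonneg h0
  have hc := two_pow_cast n
  have hvlt : v < 2^n - 1 := by omega
  have hvpos : 0 < v := by
    rcases Nat.eq_zero_or_pos v with h' | h'
    · exfalso; apply h; rw [← hveq, h']; rfl
    · exact h'
  have key : (-u) % M = (((2^n - 1 - v : ℕ)) : ℤ) := by
    have h2 : ((2^n - 1 - v : ℕ) : ℤ) = M - v := by
      rw [Nat.cast_sub (by omega)]
      rw [hc]
    have h3 : (-u) % M = (M - (v:ℤ)) % M := by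
      have hmd : M ∣ (M - (v:ℤ)) - (-u) := by
        rw [hveq]
        have he : M - u % M + u = M + (u - u % M) := by ring
        rw [sub_neg_eq_add, he]
        exact dvd_add dvd_rfl (Int.dvd_self_sub_of_emod_eq rfl)
      refine (Int.modEq_iff_dvd.mpr ?_).symm
      rw [show -u - (M - (v:ℤ)) = -(M - (v:ℤ) - -u) by ring]
      exact dvd_neg.mpr hmd
    rw [h3, Int.emod_eq_of_lt (by omega) (by omega), h2]
  rw [wt_eq_bc, wt_eq_bc, ← hMdef, key, Int.toNat_natCast]
  have hrfl : (u % M).toNat = v := rfl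
  rw [hrfl]
  exact bc_compl n v (by omega)

lemma pow_two_mul (m : ℕ) : (2:ℤ)^(2*m) = 2^m * 2^m := by
  rw [two_mul, pow_add]

/-- Step A: sign flip on the `(2^m - 1)`-part preserves weight. -/
lemma wt_sign_flip (m : ℕ) (hm : 0 < m) (a b : ℤ) :
    wt (2*m) ((2^m+1)*a + (2^m-1)*b) = wt (2*m) ((2^m+1)*a - (2^m-1)*b) := by
  rw [← wt_two_pow_mul (2*m) (by omega) m ((2^m+1)*a + (2^m-1)*b)]
  apply wt_congr
  have he : (2:ℤ)^m * ((2^m+1)*a + (2^m-1)*b) - ((2^m+1)*a - (2^m-1)*b)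
      = ((2:ℤ)^(2*m) - 1) * (a + b) := by
    rw [pow_two_mul]; ring
  rw [he]
  exact Dvd.intro _ rfl


lemma bc_zero : bc 0 = 0 := by simp [bc]

lemma bc_top (m : ℕ) : bc (2^m - 1) = m := by
  have h := bc_compl m 0 (pow_pos (by norm_num) m)
  simpa [bc_zero] using h

lemma card_le_of_pairing (R : ℕ) (P : ℕ → Prop) [DecidablePred P]
    (hpair : ∀ j < R, P j → ¬ P (if j = 0 then 0 else R - j)) :
    2 * ((Finset.range R).filter P).card ≤ R := by
  set ι : ℕ → ℕ := fun j => if j = 0 then 0 else R - j with hι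
  set S := (Finset.range R).filter P with hSdef
  have hmemS : ∀ j ∈ S, j < R ∧ P j := by
    intro j hj
    rw [hSdef, Finset.mem_filter, Finset.mem_range] at hj
    exact hj
  have hinj : Set.InjOn ι S := by
    intro a ha b hb hab
    have ha' := (hmemS a ha).1
    have hb' := (hmemS b hb).1
    simp only [hι] at hab
    split_ifs at hab <;> omega
  have hcard : (S.image ι).card = S.card := Finset.card_image_of_injOn hinj
  have hdisj : Disjoint S (S.image ι) := by
    rw [Finset.disjoint_left]
    intro a haS haI
    obtain ⟨b, hbS, hba⟩ := Finset.mem_image.mp haI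
    obtain ⟨hbR, hPb⟩ := hmemS b hbS
    obtain ⟨-, hPa⟩ := hmemS a haS
    rw [← hba] at hPa
    exact hpair b hbR hPb hPa
  have hsub : S ∪ S.image ι ⊆ Finset.range R := by
    intro x hx
    rcases Finset.mem_union.mp hx with hx | hx
    · exact Finset.filter_subset _ _ hx
    · obtain ⟨b, hbS, hba⟩ := Finset.mem_image.mp hx
      have hbR := (hmemS b hbS).1
      rw [Finset.mem_range]
      simp only [hι] at hba
      split_ifs at hba <;> omega
  have hle := Finset.card_le_card hsub
  rw [Finset.card_union_of_disjoint hdisj, hcard, Finset.card_range] at hle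
  omega

lemma count_odd (m t : ℕ) (hmt : m = 2*t+1) :
    ((Finset.range (2^m)).filter (fun j => bc j + bc j < m)).card = 2^(m-1) := by
  have hpw : 2^m = 2 * 2^(m-1) := by rw [← pow_succ']; congr 1; omega
  set A := (Finset.range (2^m)).filter (fun j => bc j + bc j < m) with hA
  set c : ℕ → ℕ := fun j => 2^m - 1 - j with hc
  have himg : A.image c = (Finset.range (2^m)) \ A := by
    ext x
    simp only [hA, hc, Finset.mem_image, Finset.mem_sdiff, Finset.mem_range, Finset.mem_filter]
    constructor
    · rintro ⟨j, ⟨hj, hPj⟩, rfl⟩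
      have hcsum := bc_compl m j hj
      exact ⟨by omega, by rintro ⟨-, hPc⟩; omega⟩
    · rintro ⟨hx, hnP⟩
      have hcsum := bc_compl m x hx
      have hnP' : ¬ (bc x + bc x < m) := fun h => hnP ⟨hx, h⟩
      refine ⟨2^m - 1 - x, ⟨by omega, ?_⟩, by omega⟩
      omega
  have hinj : Set.InjOn c A := by
    intro a ha b hb hab
    have ha' := Finset.mem_range.mp (Finset.mem_filter.mp ha).1
    have hb' := Finset.mem_range.mp (Finset.mem_filter.mp hb).1
    simp only [hc] at hab
    omega
  have hcard := Finset.card_image_of_injOn hinj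
  rw [himg] at hcard
  have hsubA : A ⊆ Finset.range (2^m) := Finset.filter_subset _ _
  rw [Finset.card_sdiff_of_subset hsubA, Finset.card_range] at hcard
  have hle := Finset.card_le_card hsubA
  rw [Finset.card_range] at hle
  omega

lemma count_even (m t : ℕ) (ht : 0 < t) (hmt : m = 2*t) :
    2 * ((Finset.range (2^m)).filter (fun j => bc j + bc j < m)).card < 2^m := by
  set A := (Finset.range (2^m)).filter (fun j => bc j + bc j < m) with hA
  set c : ℕ → ℕ := fun j => 2^m - 1 - j with hc
  have hmemA : ∀ j ∈ A, j < 2^m ∧ bc j + bc j < m := by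
    intro j hj
    rw [hA, Finset.mem_filter, Finset.mem_range] at hj
    exact hj
  set j0 := 2^t - 1 with hj0
  have h2t : 0 < 2^t := pow_pos (by norm_num) t
  have htm : 2^t < 2^m := Nat.pow_lt_pow_right (by norm_num) (by omega)
  have hj0lt : j0 < 2^m := by omega
  have hbcj0 : bc j0 = t := bc_top t
  have hj0A : j0 ∉ A := by
    rw [hA, Finset.mem_filter]
    rintro ⟨-, hP⟩
    omega
  have hinj : Set.InjOn c A := by
    intro a ha b hb hab
    have ha' := (hmemA a ha).1
    have hb' := (hmemA b hb).1
    simp only [hc] at hab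
    omega
  have hcard := Finset.card_image_of_injOn hinj
  have hdisj : Disjoint A (A.image c) := by
    rw [Finset.disjoint_left]
    intro a haA haI
    obtain ⟨b, hbA, hba⟩ := Finset.mem_image.mp haI
    obtain ⟨hbR, hPb⟩ := hmemA b hbA
    obtain ⟨-, hPa⟩ := hmemA a haA
    have hcsum := bc_compl m b hbR
    simp only [hc] at hba
    rw [hba] at hcsum
    omega
  have hj0I : j0 ∉ A.image c := by
    intro hmem
    obtain ⟨b, hbA, hba⟩ := Finset.mem_image.mp hmem
    obtain ⟨hbR, hPb⟩ := hmemA b hbA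
    have hcsum := bc_compl m b hbR
    simp only [hc] at hba
    rw [hba] at hcsum
    omega
  have hsub : insert j0 (A ∪ A.image c) ⊆ Finset.range (2^m) := by
    intro x hx
    rw [Finset.mem_insert] at hx
    rcases hx with rfl | hx
    · exact Finset.mem_range.mpr hj0lt
    rcases Finset.mem_union.mp hx with hx | hx
    · exact Finset.filter_subset _ _ hx
    · obtain ⟨b, hbA, hba⟩ := Finset.mem_image.mp hx
      have hbR := (hmemA b hbA).1
      rw [Finset.mem_range]
      simp only [hc] at hba
      omega
  have hle := Finset.card_le_card hsub
  rw [Finset.card_insert_of_notMem (by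
        rw [Finset.mem_union]
        rintro (h | h)
        · exact hj0A h
        · exact hj0I h),
     Finset.card_union_of_disjoint hdisj, hcard, Finset.card_range] at hle
  omega

lemma wt_k0 (m : ℕ) (hm : 0 < m) (j : ℕ) (hj : j < 2^m - 1) :
    wt (2*m) ((2^m + 1) * (j:ℤ)) = bc j + bc j := by
  have h2m : (0:ℤ) < 2^m := by positivity
  have hjle : (j:ℤ) ≤ 2^m - 2 := by
    have h1 : (j:ℤ) < ((2^m - 1 : ℕ) : ℤ) := by exact_mod_cast hj
    rw [two_pow_cast] at h1
    omega
  have hub : ((2:ℤ)^m + 1) * (j:ℤ) < 2^(2*m) - 1 := by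
    have h2 : ((2:ℤ)^m+1) * j ≤ (2^m+1)*(2^m-2) :=
      mul_le_mul_of_nonneg_left hjle (by positivity)
    have h3 : ((2:ℤ)^m+1)*(2^m-2) = 2^(2*m) - 2^m - 2 := by rw [pow_two_mul]; ring
    omega
  have hlb : (0:ℤ) ≤ (2^m+1) * (j:ℤ) := by positivity
  rw [wt_eq_bc, Int.emod_eq_of_lt hlb hub]
  have hcast : (((2^m+1) * j : ℕ) : ℤ) = ((2:ℤ)^m+1) * j := by push_cast; ring
  rw [← hcast, Int.toNat_natCast, show (2^m+1)*j = j + 2^m * j from by ring]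
  exact bc_split m j j (by omega)

theorem stmt_5 (m k : ℕ) (hm : 0 < m) (hk : k ≤ 2^m)
    (S : Finset ℕ)
    (hS : S = (Finset.range (2^m - 1)).filter
      (fun j : ℕ => wt (2*m) ((2^m + 1) * (j : ℤ) + (2^m - 1) * (k : ℤ)) < m)) :
    S.card ≤ 2^(m-1) ∧ (S.card = 2^(m-1) ↔ Odd m ∧ k = 0) := by
  have hpw : 2^m = 2 * 2^(m-1) := by rw [← pow_succ']; congr 1; omega
  have h2p : 0 < 2^(m-1) := pow_pos (by norm_num) _
  subst hS
  rcases eq_or_ne k 0 with rfl | hk0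
  · -- k = 0
    have hSeq : (Finset.range (2^m - 1)).filter
        (fun j : ℕ => wt (2*m) ((2^m + 1) * (j : ℤ) + (2^m - 1) * ((0:ℕ) : ℤ)) < m)
        = (Finset.range (2^m)).filter (fun j => bc j + bc j < m) := by
      ext j
      simp only [Finset.mem_filter, Finset.mem_range]
      have hexpr : ((2:ℤ)^m + 1) * (j : ℤ) + ((2:ℤ)^m - 1) * ((0:ℕ) : ℤ)
          = (2^m + 1) * (j:ℤ) := by push_cast; ring
      constructor
      · rintro ⟨hj, hP⟩
        rw [hexpr, wt_k0 m hm j hj] at hP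
        exact ⟨by omega, hP⟩
      · rintro ⟨hj, hP⟩
        have hjlt : j < 2^m - 1 := by
          rcases eq_or_ne j (2^m - 1) with rfl | hne
          · exfalso
            have := bc_top m
            omega
          · omega
        refine ⟨hjlt, ?_⟩
        rw [hexpr, wt_k0 m hm j hjlt]
        exact hP
    rw [hSeq]
    rcases Nat.even_or_odd m with heven | hodd
    · obtain ⟨t, ht⟩ := heven
      have hcount := count_even m t (by omega) (by omega)
      have hle : ((Finset.range (2^m)).filter (fun j => bc j + bc j < m)).card ≤ 2^(m-1) - 1 := by
        omega
      refine ⟨by omega, ?_, ?_⟩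
      · intro h; omega
      · rintro ⟨hodd, -⟩
        exact absurd hodd (by simp [Nat.not_odd_iff_even.mpr ⟨t, ht⟩])
    · obtain ⟨t, ht⟩ := hodd
      have hcount := count_odd m t (by omega)
      exact ⟨le_of_eq hcount, fun _ => ⟨⟨t, ht⟩, rfl⟩, fun _ => hcount⟩
  · -- k ≠ 0
    set R := 2^m - 1 with hRdef
    have hpair : ∀ j < R, (fun j : ℕ => wt (2*m) ((2^m + 1) * (j : ℤ) + (2^m - 1) * (k : ℤ)) < m) j →
        ¬ (fun j : ℕ => wt (2*m) ((2^m + 1) * (j : ℤ) + (2^m - 1) * (k : ℤ)) < m)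
          (if j = 0 then 0 else R - j) := by
      intro j hj hPj hPi
      -- nonvanishing
      have hnz : ((2^m + 1) * (j:ℤ) + (2^m - 1) * (k:ℤ)) % ((2:ℤ)^(2*m) - 1) ≠ 0 := by
        intro h0
        have hdvd : ((2:ℤ)^(2*m) - 1) ∣ ((2^m + 1) * (j:ℤ) + (2^m - 1) * (k:ℤ)) :=
          Int.dvd_of_emod_eq_zero h0
        have h1 : ((2:ℤ)^m + 1) ∣ ((2^m + 1) * (j:ℤ) + (2^m - 1) * (k:ℤ)) :=
          dvd_trans ⟨(2:ℤ)^m - 1, by rw [pow_two_mul]; ring⟩ hdvd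
        have h2 : ((2:ℤ)^m + 1) ∣ (2 * (k:ℤ)) := by
          have he : (2:ℤ)*k = (2^m+1)*((k:ℤ)+j) - ((2^m+1)*(j:ℤ) + (2^m-1)*(k:ℤ)) := by ring
          rw [he]
          exact dvd_sub (dvd_mul_right _ _) h1
        have h4 : (2^m + 1 : ℕ) ∣ 2 * k := by
          have h5 : ((2^m + 1 : ℕ) : ℤ) ∣ ((2*k : ℕ) : ℤ) := by push_cast; exact h2
          exact_mod_cast h5
        obtain ⟨c, hc⟩ := h4
        have hc2 : c < 2 := by
          by_contra h'
          push_neg at h'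
          have := Nat.mul_le_mul_left (2^m+1) h'
          omega
        interval_cases c <;> omega
      have hsum := wt_add_neg (2*m) (by omega) _ hnz
      have hneg : wt (2*m) (-((2^m + 1) * (j:ℤ) + (2^m - 1) * (k:ℤ)))
          = wt (2*m) ((2^m + 1) * (((if j = 0 then 0 else R - j) : ℕ) : ℤ) + (2^m - 1) * (k:ℤ)) := by
        have e1 : -((2^m + 1) * (j:ℤ) + (2^m - 1) * (k:ℤ))
            = (2^m+1)*(-(j:ℤ)) + (2^m-1)*(-(k:ℤ)) := by ring
        rw [e1, wt_sign_flip m hm (-(j:ℤ)) (-(k:ℤ)),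
          show (2^m+1)*(-(j:ℤ)) - (2^m-1)*(-(k:ℤ)) = (2^m+1)*(-(j:ℤ)) + (2^m-1)*(k:ℤ) from by ring]
        symm
        apply wt_congr
        rcases eq_or_ne j 0 with rfl | hj0
        · simp
        · have hcast : (((if j = 0 then 0 else R - j) : ℕ) : ℤ) = ((2:ℤ)^m - 1) - j := by
            rw [if_neg hj0, Nat.cast_sub (by omega), hRdef, two_pow_cast]
          rw [hcast,
            show ((2^m + 1) * (((2:ℤ)^m - 1) - (j:ℤ)) + (2^m - 1) * (k:ℤ))
              - ((2^m+1)*(-(j:ℤ)) + (2^m-1)*(k:ℤ)) = ((2:ℤ)^(2*m) - 1) * 1 from by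
                rw [pow_two_mul]; ring]
          exact Dvd.intro _ rfl
      omega
    have hmain := card_le_of_pairing R _ hpair
    have hle : ((Finset.range R).filter
        (fun j : ℕ => wt (2*m) ((2^m + 1) * (j : ℤ) + (2^m - 1) * (k : ℤ)) < m)).card
        ≤ 2^(m-1) - 1 := by omega
    refine ⟨by omega, ?_, ?_⟩
    · intro h; omega
    · rintro ⟨-, hk0'⟩; exact absurd hk0' hk0
end

section
/- Let n = 2m. For each integer k with 1 ≤ k ≤ 2^m, the sets S_k = { j ∈ Z/(2^m-1)Z : wt_n((2^m+1)j + (2^m-1)k) < m } and T_k = { j ∈ Z/(2^m-1)Z : wt_n((2^m+1)j + (2^m-1)k) > m } have the same cardinality, are disjoint, neither contains 0, and hence |S_k| ≤ 2^{m-1} - 1. -/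
namespace Stmt6Aux

def cnt (x : ℕ) : ℕ := (Nat.digits 2 x).count 1

lemma cnt_zero : cnt 0 = 0 := by simp [cnt]

lemma cnt_two_mul_add (q b : ℕ) (hb : b < 2) : cnt (2*q + b) = cnt q + b := by
  rcases Nat.eq_zero_or_pos (2*q + b) with h | h
  · have hq : q = 0 := by omega
    have hb0 : b = 0 := by omega
    simp [cnt, hq, hb0]
  · unfold cnt
    rw [Nat.digits_def' (by norm_num : 1 < 2) h]
    have h1 : (2*q+b) % 2 = b := by omega
    have h2 : (2*q+b) / 2 = q := by omega
    rw [h1, h2, List.count_cons]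
    interval_cases b <;> simp

lemma cnt_add_pow_mul (t : ℕ) : ∀ r s : ℕ, r < 2^t → cnt (r + 2^t * s) = cnt r + cnt s := by
  induction t with
  | zero =>
    intro r s hr
    have : r = 0 := by omega
    simp [this, cnt_zero]
  | succ t ih =>
    intro r s hr
    have hps : 2^(t+1) = 2*2^t := by rw [pow_succ]; ring
    have hmul : 2^(t+1)*s = 2*(2^t*s) := by rw [hps]; ring
    have h1 : r + 2^(t+1)*s = 2*(r/2 + 2^t*s) + r % 2 := by omega
    have h2 : r = 2*(r/2) + r % 2 := by omega
    rw [h1, cnt_two_mul_add _ _ (Nat.mod_lt _ (by norm_num)),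
        ih _ s (by omega)]
    conv_rhs => rw [h2]
    rw [cnt_two_mul_add _ _ (Nat.mod_lt _ (by norm_num))]
    omega

lemma cnt_compl (n : ℕ) : ∀ v : ℕ, v ≤ 2^n - 1 → cnt v + cnt (2^n - 1 - v) = n := by
  induction n with
  | zero =>
    intro v hv
    have : v = 0 := by omega
    subst this
    norm_num [cnt_zero]
  | succ n ih =>
    intro v hv
    have hp : 0 < 2^n := Nat.two_pow_pos n
    have hps : 2^(n+1) = 2*2^n := by rw [pow_succ]; ring
    obtain ⟨b, q, hb, rfl⟩ : ∃ b q, b < 2 ∧ v = 2*q + b :=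
      ⟨v % 2, v / 2, by omega, by omega⟩
    have e2 : 2^(n+1) - 1 - (2*q+b) = 2*((2^n - 1) - q) + (1 - b) := by omega
    rw [e2, cnt_two_mul_add q b hb, cnt_two_mul_add ((2^n-1)-q) (1-b) (by omega)]
    have := ih q (by omega)
    omega

lemma cnt_one : cnt 1 = 1 := by
  have := cnt_two_mul_add 0 1 (by norm_num)
  simpa [cnt_zero] using this

lemma cnt_eq_zero {v : ℕ} (h : cnt v = 0) : v = 0 := by
  induction v using Nat.strong_induction_on with
  | _ v ih =>
    rcases Nat.eq_zero_or_pos v with h0 | h0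
    · exact h0
    · have e : v = 2*(v/2) + v % 2 := by omega
      rw [e, cnt_two_mul_add _ _ (by omega)] at h
      have := ih (v/2) (by omega) (by omega)
      omega

lemma cnt_two_mul_mod (n v : ℕ) (hn : 1 ≤ n) (hv : v < 2^n - 1) :
    cnt ((2*v) % (2^n - 1)) = cnt v := by
  have hps : 2^n = 2*2^(n-1) := by
    conv_lhs => rw [show n = (n-1)+1 by omega]
    rw [pow_succ]; ring
  have hp : 0 < 2^(n-1) := Nat.two_pow_pos _
  by_cases h : v < 2^(n-1)
  · rw [Nat.mod_eq_of_lt (by omega)]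
    have := cnt_two_mul_add v 0 (by norm_num)
    simpa using this
  · have e : (2*v) % (2^n-1) = 2*(v - 2^(n-1)) + 1 := by
      rw [Nat.mod_eq_sub_mod (by omega), Nat.mod_eq_of_lt (by omega)]
      omega
    rw [e, cnt_two_mul_add _ _ (by norm_num)]
    have e2 : v = (v - 2^(n-1)) + 2^(n-1)*1 := by omega
    conv_rhs => rw [e2]
    rw [cnt_add_pow_mul (n-1) _ 1 (by omega), cnt_one]

lemma cnt_pow_mul_mod (n s v : ℕ) (hn : 2 ≤ n) (hv : v < 2^n - 1) :
    cnt ((2^s*v) % (2^n-1)) = cnt v := by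
  have hN : 4 ≤ 2^n := by
    calc (4:ℕ) = 2^2 := by norm_num
    _ ≤ 2^n := Nat.pow_le_pow_right (by norm_num) hn
  induction s with
  | zero => rw [pow_zero, one_mul, Nat.mod_eq_of_lt (by omega)]
  | succ s ih =>
    have e : 2^(s+1)*v = 2*(2^s*v) := by rw [pow_succ]; ring
    rw [e, Nat.mul_mod, Nat.mod_eq_of_lt (show 2 < 2^n - 1 by omega),
        cnt_two_mul_mod n _ (by omega) (Nat.mod_lt _ (by omega))]
    exact ih


lemma hNfact (m : ℕ) : 2^(2*m) - 1 = (2^m+1)*(2^m-1) := by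
  have h1 : (1:ℕ) ≤ 2^m := Nat.one_le_two_pow
  have h2 : (1:ℕ) ≤ 2^(2*m) := Nat.one_le_two_pow
  zify [h1, h2]
  rw [two_mul, pow_add]
  ring

lemma uu_ne (m k j : ℕ) (hm : 1 ≤ m) (hk0 : 1 ≤ k) (hk1 : k ≤ 2^m)
    (hj1 : 1 ≤ j) (hj2 : j < 2^m - 1) :
    ((2^m+1)*j + (2^m-1)*k) % (2^(2*m)-1) ≠ 0 := by
  intro h
  have h1 : (1:ℕ) ≤ 2^m := Nat.one_le_two_pow
  have hdvd : (2^(2*m)-1) ∣ (2^m+1)*j + (2^m-1)*k := Nat.dvd_of_mod_eq_zero h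
  have hBN : (2^m-1) ∣ (2^(2*m)-1) := ⟨2^m+1, by rw [hNfact m]; ring⟩
  have hB : (2^m-1) ∣ (2^m+1)*j + (2^m-1)*k := hBN.trans hdvd
  have hBj : (2^m-1) ∣ (2^m+1)*j := by
    have := Nat.dvd_sub hB (Dvd.intro k rfl)
    simpa using this
  have h2j : (2^m-1) ∣ 2*j := by
    have e : (2^m+1)*j = (2^m-1)*j + 2*j := by
      have e2 : 2^m+1 = (2^m-1)+2 := by omega
      rw [e2, add_mul]
    rw [e] at hBj
    exact (Nat.dvd_add_right (Dvd.intro j rfl)).mp hBj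
  have hodd : Odd (2^m - 1) := by
    refine Nat.Even.sub_odd h1 ?_ odd_one
    exact (Nat.even_pow.mpr ⟨even_two, by omega⟩)
  have hcop : Nat.Coprime (2^m-1) 2 :=
    Nat.coprime_comm.mp ((Nat.Prime.coprime_iff_not_dvd Nat.prime_two).mpr
      (Nat.two_dvd_ne_zero.mpr (Nat.odd_iff.mp hodd)))
  have hj : (2^m-1) ∣ j := hcop.dvd_of_dvd_mul_left h2j
  have := Nat.le_of_dvd (by omega) hj
  omega

lemma wt0 (m k : ℕ) (hm : 1 ≤ m) (hk0 : 1 ≤ k) (hk1 : k ≤ 2^m) :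
    cnt (((2^m-1)*k) % (2^(2*m)-1)) = m := by
  have h1 : (1:ℕ) ≤ 2^m := Nat.one_le_two_pow
  have h2 : (2:ℕ)^(2*m) = 2^m*2^m := by rw [two_mul, pow_add]
  have hm2 : (2:ℕ) ≤ 2^m := by
    calc (2:ℕ) = 2^1 := rfl
    _ ≤ 2^m := Nat.pow_le_pow_right (by norm_num) hm
  have hmul : (2^m-1)*2^m + 2^m = 2^m*2^m := by zify [h1]; ring
  have hkk : (2^m-1)*k ≤ (2^m-1)*2^m := Nat.mul_le_mul_left _ hk1
  have hlt : (2^m-1)*k < 2^(2*m)-1 := by omega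
  rw [Nat.mod_eq_of_lt hlt]
  have heq : (2^m-1)*k = (2^m - k) + 2^m*(k-1) := by zify [h1, hk0, hk1]; ring
  rw [heq, cnt_add_pow_mul m _ _ (by omega)]
  have hc := cnt_compl m (k-1) (by omega)
  have e3 : 2^m - 1 - (k-1) = 2^m - k := by omega
  rw [e3] at hc
  omega

lemma key (m k j : ℕ) (hm : 1 ≤ m) (hk0 : 1 ≤ k) (hk1 : k ≤ 2^m)
    (hj1 : 1 ≤ j) (hj2 : j < 2^m - 1) :
    cnt (((2^m+1)*(2^m-1-j) + (2^m-1)*k) % (2^(2*m)-1))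
      = 2*m - cnt (((2^m+1)*j + (2^m-1)*k) % (2^(2*m)-1))
    ∧ cnt (((2^m+1)*j + (2^m-1)*k) % (2^(2*m)-1)) ≤ 2*m := by
  have h1 : (1:ℕ) ≤ 2^m := Nat.one_le_two_pow
  have h2 : (2:ℕ)^(2*m) = 2^m*2^m := by rw [two_mul, pow_add]
  have hm2 : (2:ℕ) ≤ 2^m := by
    calc (2:ℕ) = 2^1 := rfl
    _ ≤ 2^m := Nat.pow_le_pow_right (by norm_num) hm
  have hmm : 2*2^m ≤ 2^m*2^m := Nat.mul_le_mul_right _ hm2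
  have hNpos : 0 < 2^(2*m)-1 := by omega
  have hvN : ((2^m+1)*j + (2^m-1)*k) % (2^(2*m)-1) < 2^(2*m)-1 :=
    Nat.mod_lt _ hNpos
  have hvne : ((2^m+1)*j + (2^m-1)*k) % (2^(2*m)-1) ≠ 0 :=
    uu_ne m k j hm hk0 hk1 hj1 hj2
  have hwN : (2^m * ((2^m+1)*j + (2^m-1)*k)) % (2^(2*m)-1) < 2^(2*m)-1 :=
    Nat.mod_lt _ hNpos
  have hwcnt : cnt ((2^m * ((2^m+1)*j + (2^m-1)*k)) % (2^(2*m)-1))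
      = cnt (((2^m+1)*j + (2^m-1)*k) % (2^(2*m)-1)) := by
    rw [Nat.mul_mod, Nat.mod_eq_of_lt (show 2^m < 2^(2*m)-1 by omega)]
    exact cnt_pow_mul_mod (2*m) m _ (by omega) (by omega)
  have hwne : (2^m * ((2^m+1)*j + (2^m-1)*k)) % (2^(2*m)-1) ≠ 0 := by
    intro h0
    exact hvne (cnt_eq_zero (by rw [← hwcnt, h0, cnt_zero]))
  have heq : (2^m+1)*(2^m-1-j) + (2^m-1)*k + 2^m*((2^m+1)*j + (2^m-1)*k)
      = (2^(2*m)-1)*(1+j+k) := by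
    have hj' : j ≤ 2^m - 1 := by omega
    zify [h1, hj', show (1:ℕ) ≤ 2^(2*m) from Nat.one_le_two_pow]
    rw [two_mul, pow_add]
    ring
  have hz : (((2^m+1)*(2^m-1-j) + (2^m-1)*k) % (2^(2*m)-1)
      + (2^m*((2^m+1)*j + (2^m-1)*k)) % (2^(2*m)-1)) % (2^(2*m)-1) = 0 := by
    have hadd := (Nat.add_mod ((2^m+1)*(2^m-1-j) + (2^m-1)*k)
      (2^m*((2^m+1)*j + (2^m-1)*k)) (2^(2*m)-1)).symm
    rw [heq] at hadd
    simpa [Nat.mul_mod_right] using hadd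
  have hrN : ((2^m+1)*(2^m-1-j) + (2^m-1)*k) % (2^(2*m)-1) < 2^(2*m)-1 :=
    Nat.mod_lt _ hNpos
  have hsum : ((2^m+1)*(2^m-1-j) + (2^m-1)*k) % (2^(2*m)-1)
      + (2^m*((2^m+1)*j + (2^m-1)*k)) % (2^(2*m)-1) = 2^(2*m)-1 := by
    obtain ⟨c, hc⟩ := Nat.dvd_of_mod_eq_zero hz
    rcases c with _ | _ | c
    · simp at hc; omega
    · simp at hc; omega
    · exfalso
      have : (2^(2*m)-1)*2 ≤ (2^(2*m)-1)*(c+1+1) :=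
        Nat.mul_le_mul_left _ (by omega)
      omega
  have hcompl := cnt_compl (2*m) ((2^m*((2^m+1)*j + (2^m-1)*k)) % (2^(2*m)-1))
    (by omega)
  have hre : ((2^m+1)*(2^m-1-j) + (2^m-1)*k) % (2^(2*m)-1)
      = 2^(2*m)-1 - (2^m*((2^m+1)*j + (2^m-1)*k)) % (2^(2*m)-1) := by omega
  rw [hre]
  omega


lemma wt_eq (m j k : ℕ) (hm : 1 ≤ m) :
    wt (2*m) ((2^m + 1) * (j : ℤ) + (2^m - 1) * (k : ℤ))
      = cnt (((2^m+1)*j + (2^m-1)*k) % (2^(2*m) - 1)) := by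
  have h1 : (1:ℕ) ≤ 2^m := Nat.one_le_two_pow
  have h2 : (1:ℕ) ≤ 2^(2*m) := Nat.one_le_two_pow
  have e1 : ((2:ℤ)^m + 1) * (j:ℤ) + ((2:ℤ)^m - 1) * (k:ℤ)
      = (((2^m+1)*j + (2^m-1)*k : ℕ) : ℤ) := by push_cast [h1]; ring
  have e2 : ((2:ℤ)^(2*m) - 1) = ((2^(2*m) - 1 : ℕ) : ℤ) := by push_cast [h2]; ring
  rw [wt, e1, e2, ← Int.natCast_mod, Int.toNat_natCast]
  rfl

end Stmt6Aux

open Stmt6Aux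

theorem stmt_6 (m k : ℕ) (hm : 0 < m) (hk0 : 1 ≤ k) (hk1 : k ≤ 2^m)
    (S T : Finset ℕ)
    (hS : S = (Finset.range (2^m - 1)).filter
      (fun j : ℕ => wt (2*m) ((2^m + 1) * (j : ℤ) + (2^m - 1) * (k : ℤ)) < m))
    (hT : T = (Finset.range (2^m - 1)).filter
      (fun j : ℕ => m < wt (2*m) ((2^m + 1) * (j : ℤ) + (2^m - 1) * (k : ℤ)))) :
    S.card = T.card ∧ Disjoint S T ∧ 0 ∉ S ∧ 0 ∉ T ∧ S.card ≤ 2^(m-1) - 1 := by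
  have hm1 : 1 ≤ m := hm
  have h1 : (1:ℕ) ≤ 2^m := Nat.one_le_two_pow
  have hm2 : (2:ℕ) ≤ 2^m := by
    calc (2:ℕ) = 2^1 := rfl
    _ ≤ 2^m := Nat.pow_le_pow_right (by norm_num) hm1
  have hmemS : ∀ j : ℕ, j ∈ S ↔ j < 2^m - 1 ∧
      cnt (((2^m+1)*j + (2^m-1)*k) % (2^(2*m)-1)) < m := by
    intro j
    rw [hS, Finset.mem_filter, Finset.mem_range, wt_eq m j k hm1]
  have hmemT : ∀ j : ℕ, j ∈ T ↔ j < 2^m - 1 ∧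
      m < cnt (((2^m+1)*j + (2^m-1)*k) % (2^(2*m)-1)) := by
    intro j
    rw [hT, Finset.mem_filter, Finset.mem_range, wt_eq m j k hm1]
  have hcnt0 : cnt (((2^m+1)*0 + (2^m-1)*k) % (2^(2*m)-1)) = m := by
    rw [show (2^m+1)*0 + (2^m-1)*k = (2^m-1)*k by ring]
    exact wt0 m k hm1 hk0 hk1
  have h0S : 0 ∉ S := by
    intro h
    have := ((hmemS 0).mp h).2
    omega
  have h0T : 0 ∉ T := by
    intro h
    have := ((hmemT 0).mp h).2
    omega
  have hneS : ∀ x ∈ S, 1 ≤ x := by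
    intro x hx
    rcases Nat.eq_zero_or_pos x with h0 | h0
    · exact absurd (h0 ▸ hx) h0S
    · exact h0
  have hneT : ∀ x ∈ T, 1 ≤ x := by
    intro x hx
    rcases Nat.eq_zero_or_pos x with h0 | h0
    · exact absurd (h0 ▸ hx) h0T
    · exact h0
  have hST : S.card = T.card := by
    apply Finset.card_nbij' (i := fun j => 2^m - 1 - j) (j := fun j => 2^m - 1 - j)
    · intro a ha
      have h0 := hneS a ha
      obtain ⟨haR, haC⟩ := (hmemS a).mp ha
      obtain ⟨hk1', hk2'⟩ := key m k a hm1 hk0 hk1 h0 haR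
      exact (hmemT (2^m - 1 - a)).mpr ⟨by omega, by omega⟩
    · intro a ha
      have h0 := hneT a ha
      obtain ⟨haR, haC⟩ := (hmemT a).mp ha
      obtain ⟨hk1', hk2'⟩ := key m k a hm1 hk0 hk1 h0 haR
      exact (hmemS (2^m - 1 - a)).mpr ⟨by omega, by omega⟩
    · intro a ha
      have := ((hmemS a).mp ha).1
      show 2^m - 1 - (2^m - 1 - a) = a
      omega
    · intro a ha
      have := ((hmemT a).mp ha).1
      show 2^m - 1 - (2^m - 1 - a) = a
      omega
  have hdisj : Disjoint S T := by
    rw [Finset.disjoint_left]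
    intro a haS haT
    have := ((hmemS a).mp haS).2
    have := ((hmemT a).mp haT).2
    omega
  refine ⟨hST, hdisj, h0S, h0T, ?_⟩
  have hsub : S ∪ T ⊆ (Finset.range (2^m-1)).erase 0 := by
    intro x hx
    rcases Finset.mem_union.mp hx with hx | hx
    · exact Finset.mem_erase.mpr ⟨by have := hneS x hx; omega,
        Finset.mem_range.mpr ((hmemS x).mp hx).1⟩
    · exact Finset.mem_erase.mpr ⟨by have := hneT x hx; omega,
        Finset.mem_range.mpr ((hmemT x).mp hx).1⟩
  have hcard := Finset.card_le_card hsub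
  rw [Finset.card_union_of_disjoint hdisj,
      Finset.card_erase_of_mem (Finset.mem_range.mpr (by omega)),
      Finset.card_range] at hcard
  have h2 : 2^m = 2*2^(m-1) := by
    conv_lhs => rw [show m = (m-1)+1 by omega]
    rw [pow_succ]; ring
  omega
end

section
/- Let n = 2m. The Boolean function F on F_{2^n} with support (Γ × U) ∪ ({1} × Λ), where Γ = {β, β^2, ..., β^{2^{m-1}-1}} for a primitive element β of F_{2^m}, U is the subgroup of F_{2^n}^* of order 2^m + 1, and Λ = {1, ξ, ..., ξ^{2^{m-1}}} for a generator ξ of U, is balanced, i.e., has Hamming weight 2^{n-1}. -/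
open Finset Polynomial

private lemma pow_inj_aux {F : Type*} [Field F] (x : F) (hx : x ≠ 0) {a c : ℕ}
    (ha : a < orderOf x) (hc : c < orderOf x) (hle : a ≤ c) (h : x ^ a = x ^ c) : a = c := by
  by_contra hne
  have h1 : x ^ a * x ^ (c - a) = x ^ a * 1 := by
    rw [mul_one, ← pow_add, show a + (c - a) = c by omega, h]
  have h2 : x ^ (c - a) = 1 := mul_left_cancel₀ (pow_ne_zero a hx) h1
  have := Nat.le_of_dvd (by omega) (orderOf_dvd_of_pow_eq_one h2)
  omega

private lemma pow_inj' {F : Type*} [Field F] (x : F) (hx : x ≠ 0) {a c : ℕ}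
    (ha : a < orderOf x) (hc : c < orderOf x) (h : x ^ a = x ^ c) : a = c := by
  rcases le_total a c with hle | hle
  · exact pow_inj_aux x hx ha hc hle h
  · exact (pow_inj_aux x hx hc ha hle h.symm).symm

/-- Let `n = 2m`. The Boolean function on `𝔽_{2^n}` with support
`(Γ × U) ∪ ({1} × Λ)`, where `Γ = {β, β², ..., β^(2^(m-1)-1)}` for a primitive
element `β` of `𝔽_{2^m}`, `U` is the subgroup of `𝔽_{2^n}^*` of order `2^m + 1`
with generator `ξ`, and `Λ = {1, ξ, ..., ξ^(2^(m-1))}`, is balanced: its support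
has cardinality `2^(n-1)`. -/
theorem stmt_14 (m : ℕ) (hm : 0 < m) (F : Type*) [Field F] [Fintype F]
    (hF : Fintype.card F = 2^(2*m))
    (β ξ : F) (hβ : orderOf β = 2^m - 1) (hξ : orderOf ξ = 2^m + 1) :
    ({x : F | ∃ i : ℕ, 1 ≤ i ∧ i ≤ 2^(m-1) - 1 ∧ ∃ z : F, z^(2^m + 1) = 1 ∧ x = β^i * z}
        ∪ {x : F | ∃ k : ℕ, k ≤ 2^(m-1) ∧ x = ξ^k}).ncard = 2^(2*m - 1) := by
  classical
  have h2m : 2^m = 2 * 2^(m-1) := by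
    conv_lhs => rw [show m = (m-1)+1 by omega]
    ring
  have ha1 : 1 ≤ 2^(m-1) := Nat.one_le_two_pow
  have hβpow : β ^ (2^m - 1) = 1 := hβ ▸ pow_orderOf_eq_one β
  have hξpow : ξ ^ (2^m + 1) = 1 := hξ ▸ pow_orderOf_eq_one ξ
  have hβ0 : β ≠ 0 := fun h => by
    rw [h, zero_pow (by omega)] at hβpow; exact zero_ne_one hβpow
  have hξ0 : ξ ≠ 0 := fun h => by
    rw [h, zero_pow (by omega)] at hξpow; exact zero_ne_one hξpow
  -- every (2^m+1)-th root of unity is a power of ξ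
  have roots : ∀ z : F, z ^ (2^m + 1) = 1 → ∃ k < 2^m + 1, z = ξ ^ k := by
    intro z hz
    set N := 2^m + 1 with hN
    have hNpos : 0 < N := by positivity
    set I : Finset F := (Finset.range N).image (ξ ^ ·) with hI
    have hcard : I.card = N := by
      rw [hI, Finset.card_image_of_injOn, Finset.card_range]
      intro a ha b hb hab
      exact pow_inj' ξ hξ0 (hξ ▸ Finset.mem_range.mp ha) (hξ ▸ Finset.mem_range.mp hb) hab
    have hsub : I ⊆ nthRootsFinset N (1 : F) := by
      intro x hx
      rw [hI, Finset.mem_image] at hx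
      obtain ⟨k, _, rfl⟩ := hx
      rw [mem_nthRootsFinset hNpos, ← pow_mul, mul_comm, pow_mul, hξpow, one_pow]
    have hle : (nthRootsFinset N (1 : F)).card ≤ I.card := by
      rw [hcard, nthRootsFinset_def]
      exact le_trans (Multiset.toFinset_card_le _) (Polynomial.card_nthRoots N 1)
    have heq : I = nthRootsFinset N (1 : F) := Finset.eq_of_subset_of_card_le hsub hle
    have hzI : z ∈ I := heq ▸ (mem_nthRootsFinset hNpos (1 : F)).mpr hz
    rw [hI, Finset.mem_image] at hzI
    obtain ⟨k, hk, rfl⟩ := hzI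
    exact ⟨k, Finset.mem_range.mp hk, rfl⟩
  -- key injectivity
  have key : ∀ a b c d : ℕ, a < 2^m - 1 → c < 2^m - 1 → b < 2^m + 1 → d < 2^m + 1 →
      β^a * ξ^b = β^c * ξ^d → a = c ∧ b = d := by
    intro a b c d ha hc hb hd h
    set g : F := β^a * (β^c)⁻¹ with hg
    have hg0 : g ≠ 0 :=
      mul_ne_zero (pow_ne_zero _ hβ0) (inv_ne_zero (pow_ne_zero _ hβ0))
    have hgb : g ^ (2^m - 1) = 1 := by
      rw [hg, mul_pow, inv_pow, pow_right_comm β a, pow_right_comm β c, hβpow,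
        one_pow, one_pow, inv_one, mul_one]
    have hg2 : g = ξ^d * (ξ^b)⁻¹ := by
      rw [hg]
      field_simp
      linear_combination h
    have hgx : g ^ (2^m + 1) = 1 := by
      rw [hg2, mul_pow, inv_pow, pow_right_comm ξ d, pow_right_comm ξ b, hξpow,
        one_pow, one_pow, inv_one, mul_one]
    have hgsq : g ^ 2 = 1 := by
      have := hgx
      rw [show 2^m + 1 = (2^m - 1) + 2 by omega, pow_add, hgb, one_mul] at this
      exact this
    obtain ⟨t, ht⟩ : ∃ t, 2^m - 1 = 2*t + 1 := ⟨2^(m-1) - 1, by omega⟩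
    have hg1 : g = 1 := by
      have h1 : g ^ (2*t + 1) = 1 := ht ▸ hgb
      rw [pow_succ, pow_mul, hgsq, one_pow, one_mul] at h1
      exact h1
    have hβac : β ^ a = β ^ c := by
      rw [mul_inv_eq_one₀ (pow_ne_zero _ hβ0)] at hg1
      exact hg1
    have hac : a = c := pow_inj' β hβ0 (hβ ▸ ha) (hβ ▸ hc) hβac
    subst hac
    have hξbd : ξ ^ b = ξ ^ d := mul_left_cancel₀ (pow_ne_zero _ hβ0) h
    exact ⟨rfl, pow_inj' ξ hξ0 (hξ ▸ hb) (hξ ▸ hd) hξbd⟩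
  set f : ℕ × ℕ → F := fun p => β ^ p.1 * ξ ^ p.2 with hf
  set T : Finset (ℕ × ℕ) :=
    (Finset.Icc 1 (2^(m-1) - 1) ×ˢ Finset.range (2^m + 1)) ∪
      ({0} ×ˢ Finset.Iic (2^(m-1))) with hT
  have hmemT : ∀ p : ℕ × ℕ, p ∈ T ↔
      (1 ≤ p.1 ∧ p.1 ≤ 2^(m-1) - 1) ∧ p.2 < 2^m + 1 ∨ p.1 = 0 ∧ p.2 ≤ 2^(m-1) := by
    intro p
    simp only [hT, Finset.mem_union, Finset.mem_product, Finset.mem_Icc, Finset.mem_range,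
      Finset.mem_Iic, Finset.mem_singleton]
  have hbound : ∀ p : ℕ × ℕ, p ∈ T → p.1 < 2^m - 1 ∧ p.2 < 2^m + 1 := by
    intro p hp
    rcases (hmemT p).mp hp with ⟨⟨h1, h2⟩, h3⟩ | ⟨h1, h2⟩ <;> omega
  have hinj : Set.InjOn f ↑T := by
    intro p hp q hq hpq
    obtain ⟨h1, h2⟩ := hbound p hp
    obtain ⟨h3, h4⟩ := hbound q hq
    obtain ⟨he1, he2⟩ := key p.1 p.2 q.1 q.2 h1 h3 h2 h4 hpq
    exact Prod.ext he1 he2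
  have hS : ({x : F | ∃ i : ℕ, 1 ≤ i ∧ i ≤ 2^(m-1) - 1 ∧
        ∃ z : F, z^(2^m + 1) = 1 ∧ x = β^i * z}
        ∪ {x : F | ∃ k : ℕ, k ≤ 2^(m-1) ∧ x = ξ^k}) = ↑(T.image f) := by
    ext x
    simp only [Set.mem_union, Set.mem_setOf_eq, Finset.coe_image, Set.mem_image,
      Finset.mem_coe]
    constructor
    · rintro (⟨i, hi1, hi2, z, hz, rfl⟩ | ⟨k, hk, rfl⟩)
      · obtain ⟨k, hkN, rfl⟩ := roots z hz
        exact ⟨(i, k), (hmemT _).mpr (Or.inl ⟨⟨hi1, hi2⟩, hkN⟩), rfl⟩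
      · exact ⟨(0, k), (hmemT _).mpr (Or.inr ⟨rfl, hk⟩), by simp [hf]⟩
    · rintro ⟨⟨i, k⟩, hik, rfl⟩
      rcases (hmemT _).mp hik with ⟨⟨h1, h2⟩, h3⟩ | ⟨h1, h2⟩
      · exact Or.inl ⟨i, h1, h2, ξ ^ k,
          by rw [← pow_mul, mul_comm, pow_mul, hξpow, one_pow], rfl⟩
      · refine Or.inr ⟨k, h2, ?_⟩
        have hi0 : i = 0 := h1
        subst hi0
        simp [hf]
  rw [hS, Set.ncard_coe_finset, Finset.card_image_of_injOn hinj, hT]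
  have hdisj : Disjoint (Finset.Icc 1 (2^(m-1) - 1) ×ˢ Finset.range (2^m + 1))
      (({0} : Finset ℕ) ×ˢ Finset.Iic (2^(m-1))) := by
    rw [Finset.disjoint_left]
    rintro ⟨i, k⟩ h1 h2
    simp only [Finset.mem_product, Finset.mem_Icc, Finset.mem_singleton] at h1 h2
    omega
  rw [Finset.card_union_of_disjoint hdisj, Finset.card_product, Finset.card_product,
    Nat.card_Icc, Finset.card_range, Nat.card_Iic, Finset.card_singleton]
  have h2m1 : 2^(2*m - 1) = 2 * (2^(m-1) * 2^(m-1)) := by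
    rw [show 2*m - 1 = (m-1) + (m-1) + 1 by omega, pow_succ, pow_add]
    ring
  obtain ⟨b, hb⟩ : ∃ b, 2^(m-1) = b + 1 := ⟨2^(m-1) - 1, by omega⟩
  rw [h2m1, h2m, hb]
  have e1 : b + 1 - 1 + 1 - 1 = b := by omega
  rw [e1]
  ring
end

section
/- Let n = 2m and let a ∈ F_{2^m}^* ⊆ F_{2^n}. Let U be the subgroup of F_{2^n}^* of order 2^m + 1. Then the character sum Σ_{z ∈ U} (-1)^{Tr^n_1(az)} equals 1 - K(a), where K(a) = Σ_{x ∈ F_{2^m}} (-1)^{Tr^m_1(1/x + ax)} is the binary Kloosterman sum (with the convention 1/0 = 0). -/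
set_option linter.unusedSectionVars false

open Finset Polynomial

namespace Stmt16Aux

variable {F : Type*} [Field F] [Fintype F] [DecidableEq F]

/-- partial trace sum -/
def tr (k : ℕ) (x : F) : F := ∑ i ∈ Finset.range k, x ^ 2 ^ i

section CharTwoF
variable [CharP F 2]

lemma tr_add (k : ℕ) (x y : F) : tr k (x + y) = tr k x + tr k y := by
  unfold tr
  rw [← Finset.sum_add_distrib]
  exact Finset.sum_congr rfl fun i _ => add_pow_char_pow ..

lemma tr_sq (k : ℕ) (x : F) (hx : x ^ 2 ^ k = x) : tr k (x ^ 2) = tr k x := by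
  have h1 : ∀ i, (x ^ 2) ^ 2 ^ i = x ^ 2 ^ (i + 1) := by
    intro i
    rw [← pow_mul, pow_succ, mul_comm]
  have h3 := Finset.sum_range_succ' (fun i => x ^ 2 ^ i) k
  have h4 := Finset.sum_range_succ (fun i => x ^ 2 ^ i) k
  unfold tr
  apply add_right_cancel (b := x)
  simp only [h1]
  have h5 : (∑ i ∈ Finset.range k, x ^ 2 ^ (i + 1)) + x ^ 2 ^ 0 =
      (∑ i ∈ Finset.range k, x ^ 2 ^ i) + x ^ 2 ^ k := by
    rw [← h3, h4]
  rw [pow_zero, pow_one, hx] at h5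
  exact h5

lemma tr_split (m : ℕ) (y : F) : tr (2 * m) y = tr m y + tr m (y ^ 2 ^ m) := by
  have h2 : tr m (y ^ 2 ^ m) = ∑ i ∈ Finset.range m, y ^ 2 ^ (m + i) := by
    unfold tr
    refine Finset.sum_congr rfl fun i _ => ?_
    rw [← pow_mul, ← pow_add]
  rw [h2]
  unfold tr
  rw [two_mul, Finset.sum_range_add]

lemma tr_two_mul (m : ℕ) (x : F) (hx : x ^ 2 ^ m = x) : tr (2 * m) x = 0 := by
  rw [tr_split, hx, CharTwo.add_self_eq_zero]

lemma tr_mem (k : ℕ) (x : F) (hx : x ^ 2 ^ k = x) : tr k x = 0 ∨ tr k x = 1 := by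
  have hsq : tr k x ^ 2 = tr k x := by
    unfold tr
    rw [sum_pow_char (p := 2)]
    have : ∀ i, (x ^ 2 ^ i) ^ 2 = (x ^ 2) ^ 2 ^ i := fun i => by
      rw [← pow_mul, ← pow_mul, mul_comm]
    simp only [this]
    exact tr_sq k x hx
  have : tr k x * (tr k x - 1) = 0 := by ring_nf; linear_combination hsq
  rcases mul_eq_zero.mp this with h | h
  · exact Or.inl h
  · exact Or.inr (sub_eq_zero.mp h)

end CharTwoF

lemma card_tr_zero_le (k : ℕ) (hk : 0 < k) :
    (Finset.univ.filter fun x : F => tr k x = 0).card ≤ 2 ^ (k - 1) := by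
  set T : F[X] := ∑ i ∈ Finset.range k, X ^ 2 ^ i with hT
  have hcoeff : T.coeff (2 ^ (k - 1)) = 1 := by
    rw [hT, finset_sum_coeff]
    rw [Finset.sum_eq_single (k - 1)]
    · simp [coeff_X_pow]
    · intro i hi hne
      rw [coeff_X_pow, if_neg]
      exact fun h => hne (Nat.pow_right_injective le_rfl h.symm)
    · intro h
      exact absurd (Finset.mem_range.mpr (Nat.sub_lt hk one_pos)) h
  have hne : T ≠ 0 := fun h => by simp [h] at hcoeff
  have hdeg : T.natDegree ≤ 2 ^ (k - 1) := by
    apply natDegree_sum_le_of_forall_le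
    intro i hi
    rw [natDegree_X_pow]
    exact Nat.pow_le_pow_right (by norm_num) (Nat.le_sub_one_of_lt (Finset.mem_range.mp hi))
  have hsub : (Finset.univ.filter fun x : F => tr k x = 0) ⊆ T.roots.toFinset := by
    intro x hx
    rw [Multiset.mem_toFinset, mem_roots hne]
    have : T.eval x = tr k x := by
      rw [hT, eval_finset_sum]
      simp [tr]
    rw [IsRoot.def, this]
    exact (Finset.mem_filter.mp hx).2
  calc (Finset.univ.filter fun x : F => tr k x = 0).card
      ≤ T.roots.toFinset.card := Finset.card_le_card hsub
    _ ≤ Multiset.card T.roots := Multiset.toFinset_card_le _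
    _ ≤ T.natDegree := T.card_roots'
    _ ≤ 2 ^ (k - 1) := hdeg

section CharTwoF2
variable [CharP F 2]

lemma AS_main (k : ℕ) (hk : 0 < k)
    (hcard : (Finset.univ.filter fun x : F => x ^ 2 ^ k = x).card = 2 ^ k) :
    ((Finset.univ.filter fun x : F => x ^ 2 ^ k = x).image fun w => w ^ 2 + w)
        = Finset.univ.filter (fun b : F => b ^ 2 ^ k = b ∧ tr k b = 0) ∧
      (Finset.univ.filter (fun b : F => b ^ 2 ^ k = b ∧ tr k b = 0)).card = 2 ^ (k - 1) := by
  set S := Finset.univ.filter fun x : F => x ^ 2 ^ k = x with hS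
  set P := Finset.univ.filter (fun b : F => b ^ 2 ^ k = b ∧ tr k b = 0) with hP
  set g : F → F := fun w => w ^ 2 + w with hg
  have hone : (1 : F) ^ 2 ^ k = 1 := one_pow _
  have hsub : S.image g ⊆ P := by
    intro b hb
    obtain ⟨w, hw, rfl⟩ := Finset.mem_image.mp hb
    have hwS : w ^ 2 ^ k = w := (Finset.mem_filter.mp hw).2
    have h1 : (w ^ 2 + w) ^ 2 ^ k = w ^ 2 + w := by
      rw [add_pow_char_pow, ← pow_mul, mul_comm, pow_mul, hwS]
    have h2 : tr k (w ^ 2 + w) = 0 := by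
      rw [tr_add, tr_sq k w hwS, CharTwo.add_self_eq_zero]
    exact Finset.mem_filter.mpr ⟨Finset.mem_univ _, h1, h2⟩
  -- each fiber of g on S has exactly two elements
  have hfiber : ∀ b ∈ S.image g, (S.filter fun w => g w = b).card = 2 := by
    intro b hb
    obtain ⟨w₀, hw₀, hgw₀⟩ := Finset.mem_image.mp hb
    have hw₀S : w₀ ^ 2 ^ k = w₀ := (Finset.mem_filter.mp hw₀).2
    have hfe : (S.filter fun w => g w = b) = {w₀, w₀ + 1} := by
      ext w
      simp only [Finset.mem_filter, Finset.mem_insert, Finset.mem_singleton, hS,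
        Finset.mem_univ, true_and]
      constructor
      · rintro ⟨hwS, hgw⟩
        have he : w ^ 2 + w = w₀ ^ 2 + w₀ := by
          have : g w = g w₀ := by rw [hgw, hgw₀]
          exact this
        have key : (w + w₀) * ((w + w₀) + 1) = 0 := by
          have h2 : (w + w₀) ^ 2 + (w + w₀) = 0 := by
            rw [CharTwo.add_sq]
            have h3 : w ^ 2 + w + (w₀ ^ 2 + w₀) = 0 := by
              rw [he]; exact CharTwo.add_self_eq_zero _
            linear_combination h3
          linear_combination h2
        rcases mul_eq_zero.mp key with h | h
        · exact Or.inl (by simpa using CharTwo.add_eq_iff_eq_add.mp h)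
        · right
          have h1 : w + w₀ = 1 := by
            have := CharTwo.add_eq_iff_eq_add.mp h
            simpa using this
          exact (CharTwo.add_eq_iff_eq_add.mp h1).trans (add_comm 1 w₀)
      · rintro (rfl | rfl)
        · exact ⟨hw₀S, hgw₀⟩
        · refine ⟨?_, ?_⟩
          · rw [add_pow_char_pow, hw₀S, hone]
          · show (w₀ + 1) ^ 2 + (w₀ + 1) = b
            have hb' : w₀ ^ 2 + w₀ = b := hgw₀
            have h11 : (1 : F) + 1 = 0 := CharTwo.add_self_eq_zero 1
            linear_combination hb' + (w₀ + 1) * h11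
    rw [hfe]
    rw [Finset.card_insert_of_notMem, Finset.card_singleton]
    simp only [Finset.mem_singleton]
    intro h
    have : (1 : F) = 0 := by
      have := left_eq_add.mp h
      exact this
    exact one_ne_zero this
  have hcount : S.card = 2 * (S.image g).card := by
    rw [Finset.card_eq_sum_card_fiberwise (fun x hx => Finset.mem_image_of_mem g hx)]
    rw [Finset.sum_congr rfl hfiber, Finset.sum_const, smul_eq_mul, mul_comm]
  have himcard : (S.image g).card = 2 ^ (k - 1) := by
    have : 2 * (S.image g).card = 2 * 2 ^ (k - 1) := by
      rw [← hcount, hcard, ← pow_succ']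
      congr 1
      omega
    omega
  have hPle : P.card ≤ 2 ^ (k - 1) := by
    have hPsub : P ⊆ Finset.univ.filter fun x : F => tr k x = 0 := by
      intro b hb
      rw [Finset.mem_filter] at hb ⊢
      exact ⟨hb.1, hb.2.2⟩
    exact le_trans (Finset.card_le_card hPsub) (card_tr_zero_le k hk)
  have heq : S.image g = P :=
    Finset.eq_of_subset_of_card_le hsub (by rw [himcard]; exact hPle)
  exact ⟨heq, by rw [← heq, himcard]⟩

lemma AS_iff (k : ℕ) (hk : 0 < k)
    (hcard : (Finset.univ.filter fun x : F => x ^ 2 ^ k = x).card = 2 ^ k)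
    (b : F) (hb : b ^ 2 ^ k = b) :
    tr k b = 0 ↔ ∃ w : F, w ^ 2 ^ k = w ∧ w ^ 2 + w = b := by
  have h := (AS_main k hk hcard).1
  constructor
  · intro htr
    have : b ∈ Finset.univ.filter (fun b : F => b ^ 2 ^ k = b ∧ tr k b = 0) :=
      Finset.mem_filter.mpr ⟨Finset.mem_univ _, hb, htr⟩
    rw [← h] at this
    obtain ⟨w, hw, hgw⟩ := Finset.mem_image.mp this
    exact ⟨w, (Finset.mem_filter.mp hw).2, hgw⟩
  · rintro ⟨w, hw, rfl⟩
    have : w ^ 2 + w ∈ Finset.univ.filter (fun b : F => b ^ 2 ^ k = b ∧ tr k b = 0) := by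
      rw [← h]
      exact Finset.mem_image_of_mem _ (Finset.mem_filter.mpr ⟨Finset.mem_univ _, hw⟩)
    exact (Finset.mem_filter.mp this).2.2

-- cardinality of the subfield-style set
lemma card_S_le (k : ℕ) (hk : 0 < k) :
    (Finset.univ.filter fun x : F => x ^ 2 ^ k = x).card ≤ 2 ^ k := by
  set T : F[X] := X ^ 2 ^ k - X with hT
  have h1lt : 1 < 2 ^ k := Nat.one_lt_two_pow_iff.mpr (by omega)
  have hcoeff : T.coeff (2 ^ k) = 1 := by
    rw [hT, coeff_sub, coeff_X_pow, coeff_X, if_pos rfl, if_neg (by omega)]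
    ring
  have hne : T ≠ 0 := fun h => by simp [h] at hcoeff
  have hdeg : T.natDegree ≤ 2 ^ k := by
    refine le_trans (natDegree_sub_le _ _) ?_
    simp [natDegree_X_pow, natDegree_X]
    omega
  have hsub : (Finset.univ.filter fun x : F => x ^ 2 ^ k = x) ⊆ T.roots.toFinset := by
    intro x hx
    rw [Multiset.mem_toFinset, mem_roots hne]
    have hx' := (Finset.mem_filter.mp hx).2
    simp [IsRoot.def, hT, sub_eq_zero, hx']
  calc (Finset.univ.filter fun x : F => x ^ 2 ^ k = x).card
      ≤ T.roots.toFinset.card := Finset.card_le_card hsub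
    _ ≤ Multiset.card T.roots := Multiset.toFinset_card_le _
    _ ≤ T.natDegree := T.card_roots'
    _ ≤ 2 ^ k := hdeg

lemma card_S (m : ℕ) (hm : 0 < m) (hF : Fintype.card F = 2 ^ (2 * m)) :
    (Finset.univ.filter fun x : F => x ^ 2 ^ m = x).card = 2 ^ m := by
  set S := Finset.univ.filter fun x : F => x ^ 2 ^ m = x with hS
  set f : F → F := fun x => x ^ 2 ^ m + x with hf
  have hFf : ∀ x : F, x ^ 2 ^ (2 * m) = x := by
    intro x
    have := FiniteField.pow_card x
    rwa [hF] at this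
  have hfadd : ∀ x y : F, f (x + y) = f x + f y := by
    intro x y
    rw [hf]
    simp only [add_pow_char_pow]
    ring
  have hmaps : ∀ x : F, f x ∈ S := by
    intro x
    refine Finset.mem_filter.mpr ⟨Finset.mem_univ _, ?_⟩
    rw [hf]
    simp only [add_pow_char_pow, ← pow_mul, ← pow_add]
    rw [show m + m = 2 * m by ring, hFf x]
    ring
  have hfiberle : ∀ b ∈ Finset.univ.image f, (Finset.univ.filter fun w : F => f w = b).card ≤ S.card := by
    intro b hb
    obtain ⟨w₀, _, hw₀⟩ := Finset.mem_image.mp hb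
    apply Finset.card_le_card_of_injOn (fun w => w + w₀)
    · intro w hw
      have hfw : f w = b := (Finset.mem_filter.mp hw).2
      refine Finset.mem_filter.mpr ⟨Finset.mem_univ _, ?_⟩
      have : f (w + w₀) = 0 := by
        rw [hfadd, hfw, hw₀, CharTwo.add_self_eq_zero]
      rw [hf] at this
      have := CharTwo.add_eq_iff_eq_add.mp this
      simpa using this
    · intro x _ y _ h
      exact add_right_cancel h
  have hcount : Fintype.card F ≤ S.card * S.card := by
    have h1 : (Finset.univ : Finset F).card = ∑ b ∈ Finset.univ.image f, (Finset.univ.filter fun w : F => f w = b).card :=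
      Finset.card_eq_sum_card_fiberwise (fun x _ => Finset.mem_image_of_mem f (Finset.mem_univ x))
    have h2 : ∑ b ∈ Finset.univ.image f, (Finset.univ.filter fun w : F => f w = b).card
        ≤ (Finset.univ.image f).card * S.card := by
      rw [← smul_eq_mul, ← Finset.sum_const]
      exact Finset.sum_le_sum hfiberle
    have h3 : (Finset.univ.image f).card ≤ S.card := by
      apply Finset.card_le_card
      intro b hb
      obtain ⟨x, _, rfl⟩ := Finset.mem_image.mp hb
      exact hmaps x
    calc Fintype.card F = (Finset.univ : Finset F).card := (Finset.card_univ).symm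
      _ ≤ (Finset.univ.image f).card * S.card := h1 ▸ h2
      _ ≤ S.card * S.card := Nat.mul_le_mul_right _ h3
  have hle : S.card ≤ 2 ^ m := card_S_le m hm
  have hge : 2 ^ m ≤ S.card := by
    by_contra h
    push_neg at h
    have hlt : S.card * S.card < 2 ^ m * 2 ^ m := Nat.mul_lt_mul_of_lt_of_lt h h
    rw [← pow_add, show m + m = 2 * m by ring] at hlt
    have hc2 : 2 ^ (2 * m) ≤ S.card * S.card := by rw [← hF]; exact hcount
    exact absurd hc2 (not_le.mpr hlt)
  exact le_antisymm hle hge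


lemma sq_eq_one (z : F) (h : z ^ 2 = 1) : z = 1 := by
  have h2 : (z + 1) ^ 2 = 0 := by
    rw [CharTwo.add_sq, h, one_pow, CharTwo.add_self_eq_zero]
  have h3 : z + 1 = 0 := by
    exact pow_eq_zero_iff (by norm_num) |>.mp h2
  have := CharTwo.add_eq_iff_eq_add.mp h3
  simpa using this

lemma fiber_zero (n : ℕ) :
    (Finset.univ.filter fun z : F => z ^ (n + 1) = 1 ∧ z + z⁻¹ = 0) = {1} := by
  ext z
  simp only [Finset.mem_filter, Finset.mem_univ, true_and, Finset.mem_singleton]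
  constructor
  · rintro ⟨hzU, hz0⟩
    have hz : z ≠ 0 := by rintro rfl; simp at hzU
    have hzz : z = z⁻¹ := by
      rw [add_eq_zero_iff_eq_neg, CharTwo.neg_eq] at hz0
      exact hz0
    apply sq_eq_one
    rw [pow_two]
    nth_rewrite 2 [hzz]
    exact mul_inv_cancel₀ hz
  · rintro rfl
    refine ⟨one_pow _, ?_⟩
    rw [inv_one]
    exact CharTwo.add_self_eq_zero 1

lemma quad_roots (c : F) (y z : F) (hy : y ^ 2 + c * y = 1) (hz : z ^ 2 + c * z = 1) :
    y = z ∨ y = z + c := by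
  have htwo : (2 : F) = 0 := CharTwo.two_eq_zero
  have key : (y + z) * ((y + z) + c) = 0 := by
    linear_combination hy + hz + (y * z + 1) * htwo
  rcases mul_eq_zero.mp key with h | h
  · exact Or.inl (by simpa using CharTwo.add_eq_iff_eq_add.mp h)
  · right
    have h1 : y + z = c := by
      have := CharTwo.add_eq_iff_eq_add.mp h
      simpa using this
    exact (CharTwo.add_eq_iff_eq_add.mp h1).trans (add_comm c z)

lemma mem_U_quad (m : ℕ) (c z : F) (hzU : z ^ (2 ^ m + 1) = 1) (hzc : z + z⁻¹ = c) :
    z ≠ 0 ∧ z ^ 2 ^ m = z⁻¹ ∧ z ^ 2 + c * z = 1 := by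
  have htwo : (2 : F) = 0 := CharTwo.two_eq_zero
  have hz : z ≠ 0 := by rintro rfl; simp at hzU
  have hzq : z ^ 2 ^ m = z⁻¹ := by
    apply eq_inv_of_mul_eq_one_left
    rw [← pow_succ]
    exact hzU
  refine ⟨hz, hzq, ?_⟩
  have e : (z + z⁻¹) * z = c * z := by rw [hzc]
  have e2 : z * z + 1 = c * z := by
    rw [← e, add_mul, inv_mul_cancel₀ hz]
  linear_combination -e2 + z ^ 2 * htwo

lemma fiber_card (m : ℕ) (hm : 0 < m) (hF : Fintype.card F = 2 ^ (2 * m))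
    (c : F) (hc : c ^ 2 ^ m = c) (hc0 : c ≠ 0) :
    (Finset.univ.filter fun z : F => z ^ (2 ^ m + 1) = 1 ∧ z + z⁻¹ = c).card
      = if tr m c⁻¹ = 0 then 0 else 2 := by
  have htwo : (2 : F) = 0 := CharTwo.two_eq_zero
  have hcardS := card_S (F := F) m hm hF
  have hinv : c⁻¹ ^ 2 ^ m = c⁻¹ := by rw [inv_pow, hc]
  have hb : (c⁻¹ ^ 2) ^ 2 ^ m = c⁻¹ ^ 2 := by
    rw [← pow_mul, mul_comm, pow_mul, hinv]
  have htrb : tr m (c⁻¹ ^ 2) = tr m c⁻¹ := tr_sq m c⁻¹ hinv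
  by_cases hA : tr m c⁻¹ = 0
  · rw [if_pos hA]
    rw [Finset.card_eq_zero, Finset.filter_eq_empty_iff]
    rintro z - ⟨hzU, hzc⟩
    obtain ⟨hz, hzq, hquad⟩ := mem_U_quad m c z hzU hzc
    obtain ⟨w₀, hw₀S, hw₀⟩ := (AS_iff m hm hcardS _ hb).mp (by rw [htrb]; exact hA)
    have hz₀ : (c * w₀) ^ 2 + c * (c * w₀) = 1 := by
      have h1 : (c * w₀) ^ 2 + c * (c * w₀) = c ^ 2 * (w₀ ^ 2 + w₀) := by ring
      rw [h1, hw₀]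
      field_simp
    have hz₀S : (c * w₀) ^ 2 ^ m = c * w₀ := by rw [mul_pow, hc, hw₀S]
    have hz₀cS : (c * w₀ + c) ^ 2 ^ m = c * w₀ + c := by
      rw [add_pow_char_pow, hz₀S, hc]
    have hzS : z ^ 2 ^ m = z := by
      rcases quad_roots c z (c * w₀) hquad hz₀ with h | h
      · rw [h]; exact hz₀S
      · rw [h]; exact hz₀cS
    have hzz : z = z⁻¹ := by rw [← hzq, hzS]
    have hz1 : z = 1 := by
      apply sq_eq_one
      rw [pow_two]
      nth_rewrite 2 [hzz]
      exact mul_inv_cancel₀ hz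
    apply hc0
    rw [← hzc, hz1, inv_one]
    exact CharTwo.add_self_eq_zero 1
  · rw [if_neg hA]
    have hFf : ∀ x : F, x ^ 2 ^ (2 * m) = x := by
      intro x
      have := FiniteField.pow_card x
      rwa [hF] at this
    have hcardF : (Finset.univ.filter fun x : F => x ^ 2 ^ (2 * m) = x).card = 2 ^ (2 * m) := by
      rw [Finset.filter_true_of_mem (fun x _ => hFf x), Finset.card_univ, hF]
    have htr2m : tr (2 * m) (c⁻¹ ^ 2) = 0 := tr_two_mul m _ hb
    obtain ⟨w, -, hw⟩ := (AS_iff (2 * m) (by omega) hcardF _ (hFf _)).mp htr2m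
    set z := c * w with hzdef
    have hz2 : z ^ 2 + c * z = 1 := by
      have h1 : z ^ 2 + c * z = c ^ 2 * (w ^ 2 + w) := by rw [hzdef]; ring
      rw [h1, hw]
      field_simp
    have hz0' : z ≠ 0 := by
      intro h
      rw [h] at hz2
      simp at hz2
    have hzinv : z + c = z⁻¹ :=
      eq_inv_of_mul_eq_one_left (by linear_combination hz2)
    have hzqf : (z ^ 2 ^ m) ^ 2 + c * z ^ 2 ^ m = 1 := by
      have := congrArg (· ^ 2 ^ m) hz2
      simp only [add_pow_char_pow, mul_pow, one_pow, hc] at this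
      rw [← this]
      congr 1
      rw [← pow_mul, mul_comm, pow_mul]
    have hzq : z ^ 2 ^ m = z⁻¹ := by
      rcases quad_roots c (z ^ 2 ^ m) z hzqf hz2 with h | h
      · exfalso
        apply hA
        have hwz : w ^ 2 ^ m = w := by
          have hwc : w = c⁻¹ * z := by rw [hzdef]; field_simp
          rw [hwc, mul_pow, hinv, h]
        rw [← htrb]
        exact (AS_iff m hm hcardS _ hb).mpr ⟨w, hwz, hw⟩
      · rw [h]; exact hzinv
    have hzU : z ^ (2 ^ m + 1) = 1 := by
      rw [pow_succ, hzq, inv_mul_cancel₀ hz0']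
    have hzc : z + z⁻¹ = c := by
      rw [← hzinv]
      linear_combination z * htwo
    have hzi : z⁻¹ ^ (2 ^ m + 1) = 1 := by rw [inv_pow, hzU, inv_one]
    have hzic : z⁻¹ + (z⁻¹)⁻¹ = c := by rw [inv_inv, add_comm]; exact hzc
    have hzne : z ≠ z⁻¹ := by
      intro h
      have hz1 : z = 1 := by
        apply sq_eq_one
        rw [pow_two]
        nth_rewrite 2 [h]
        exact mul_inv_cancel₀ hz0'
      apply hc0
      rw [← hzc, hz1, inv_one]
      exact CharTwo.add_self_eq_zero 1
    have hset : (Finset.univ.filter fun y : F => y ^ (2 ^ m + 1) = 1 ∧ y + y⁻¹ = c)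
        = {z, z⁻¹} := by
      ext y
      simp only [Finset.mem_filter, Finset.mem_univ, true_and, Finset.mem_insert,
        Finset.mem_singleton]
      constructor
      · rintro ⟨hyU, hyc⟩
        obtain ⟨hy0, hyq, hyquad⟩ := mem_U_quad m c y hyU hyc
        rcases quad_roots c y z hyquad hz2 with h | h
        · exact Or.inl h
        · exact Or.inr (h.trans hzinv)
      · rintro (rfl | rfl)
        · exact ⟨hzU, hzc⟩
        · exact ⟨hzi, hzic⟩
    rw [hset, Finset.card_insert_of_notMem (by simpa using hzne), Finset.card_singleton]


lemma tr_def (k : ℕ) (x : F) : (∑ i ∈ Finset.range k, x ^ 2 ^ i) = tr k x := rfl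

lemma tr_zero (k : ℕ) : tr k (0 : F) = 0 := by
  unfold tr
  apply Finset.sum_eq_zero
  intro i _
  exact zero_pow (by positivity)

lemma point_id [CharP F 2] (s t u : F) (hs : s = 0 ∨ s = 1) (ht : t = 0 ∨ t = 1)
    (hu : u = s + t) :
    ((if s = 0 then (0 : ℤ) else 2)) * (if t = 0 then (1 : ℤ) else -1)
      = (if t = 0 then (1 : ℤ) else -1) - (if u = 0 then (1 : ℤ) else -1) := by
  have h11 : (1 : F) + 1 = 0 := CharTwo.add_self_eq_zero 1
  have h10 : (1 : F) ≠ 0 := one_ne_zero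
  subst hu
  rcases hs with rfl | rfl <;> rcases ht with rfl | rfl <;>
    simp [h11, h10]

end CharTwoF2

end Stmt16Aux

/-- Lemma (Mesnager): let `n = 2m`, `F = 𝔽_{2^n}` with subfield `𝔽_{2^m} = {x : x^(2^m) = x}`,
and `U = {z : z^(2^m+1) = 1}` the subgroup of `F^*` of order `2^m + 1`. For
`a ∈ 𝔽_{2^m}^*`, the character sum `Σ_{z ∈ U} (-1)^{Tr^n_1(a z)}` equals `1 - K(a)`,
where `K(a) = Σ_{x ∈ 𝔽_{2^m}} (-1)^{Tr^m_1(1/x + a x)}` is the binary Kloosterman sum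
(with `1/0 = 0`).  Here `Tr^n_1(y) = Σ_{i<n} y^(2^i)` is the absolute trace (an element
of `{0,1} ⊆ F`), and `(-1)^t` is encoded as `if t = 0 then 1 else -1` in `ℤ`. -/
theorem stmt_16 (m : ℕ) (hm : 0 < m) (F : Type*) [Field F] [Fintype F] [DecidableEq F]
    (hF : Fintype.card F = 2^(2*m))
    (a : F) (ha : a ≠ 0) (haK : a^(2^m) = a) :
    (∑ z ∈ Finset.univ.filter (fun z : F => z^(2^m + 1) = 1),
        (if (∑ i ∈ Finset.range (2*m), (a * z)^(2^i)) = 0 then (1:ℤ) else -1)) =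
      1 - ∑ x ∈ Finset.univ.filter (fun x : F => x^(2^m) = x),
        (if (∑ i ∈ Finset.range m, (x⁻¹ + a * x)^(2^i)) = 0 then (1:ℤ) else -1) := by
  classical
  open Stmt16Aux in
  -- characteristic 2
  have hp2 : ringChar F = 2 := by
    obtain ⟨n, hp, hc⟩ := FiniteField.card F (ringChar F)
    rw [hF] at hc
    have hdvd : ringChar F ∣ 2 ^ (2 * m) := hc ▸ dvd_pow_self _ n.2.ne'
    exact (Nat.prime_dvd_prime_iff_eq hp Nat.prime_two).mp (hp.dvd_of_dvd_pow hdvd)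
  haveI hchar : CharP F 2 := hp2 ▸ ringChar.charP F
  simp only [Stmt16Aux.tr_def]
  set S := Finset.univ.filter (fun x : F => x ^ 2 ^ m = x) with hSdef
  set U := Finset.univ.filter (fun z : F => z ^ (2 ^ m + 1) = 1) with hUdef
  have hcardS := Stmt16Aux.card_S (F := F) m hm hF
  rw [← hSdef] at hcardS
  -- basic closure facts
  have hainv : a⁻¹ ^ 2 ^ m = a⁻¹ := by rw [inv_pow, haK]
  have h0S : (0 : F) ∈ S := by
    refine Finset.mem_filter.mpr ⟨Finset.mem_univ _, ?_⟩
    exact zero_pow (by positivity)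
  -- rewrite the summand on U
  have hU_tr : ∀ z ∈ U, tr (2 * m) (a * z) = tr m (a * (z + z⁻¹)) := by
    intro z hz
    have hzU := (Finset.mem_filter.mp hz).2
    obtain ⟨hz0, hzq, -⟩ := Stmt16Aux.mem_U_quad m (z + z⁻¹) z hzU rfl
    rw [tr_split m (a * z), mul_pow, haK, hzq, ← tr_add, ← mul_add]
  have hmaps : ∀ z ∈ U, z + z⁻¹ ∈ S := by
    intro z hz
    have hzU := (Finset.mem_filter.mp hz).2
    obtain ⟨hz0, hzq, -⟩ := Stmt16Aux.mem_U_quad m (z + z⁻¹) z hzU rfl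
    refine Finset.mem_filter.mpr ⟨Finset.mem_univ _, ?_⟩
    rw [add_pow_char_pow, hzq, inv_pow, hzq, inv_inv, add_comm]
  -- fiberwise decomposition
  have hfib := Finset.sum_fiberwise_of_maps_to hmaps
    (fun z => if tr (2 * m) (a * z) = 0 then (1 : ℤ) else -1)
  refine Eq.trans hfib.symm ?_
  have hinner : ∀ c ∈ S,
      (∑ z ∈ U.filter (fun z => z + z⁻¹ = c),
        (if tr (2 * m) (a * z) = 0 then (1 : ℤ) else -1))
      = ((U.filter (fun z => z + z⁻¹ = c)).card : ℤ)
          * (if tr m (a * c) = 0 then (1 : ℤ) else -1) := by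
    intro c hc
    rw [Finset.sum_congr rfl (fun z hz => ?_), Finset.sum_const, nsmul_eq_mul]
    have hz1 := Finset.mem_filter.mp hz
    rw [hU_tr z hz1.1, hz1.2]
  rw [Finset.sum_congr rfl hinner]
  -- split off c = 0
  rw [← Finset.add_sum_erase _ _ h0S]
  have hfil0 : U.filter (fun z => z + z⁻¹ = (0 : F)) = {1} := by
    rw [hUdef, Finset.filter_filter]
    exact Stmt16Aux.fiber_zero (2 ^ m)
  have htr0 : tr m (a * (0 : F)) = 0 := by rw [mul_zero, tr_zero]
  rw [hfil0, htr0]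
  simp only [Finset.card_singleton, Nat.cast_one, if_pos rfl, one_mul]
  -- the sum over nonzero c
  have hterm : ∀ c ∈ S.erase 0,
      ((U.filter (fun z => z + z⁻¹ = c)).card : ℤ)
          * (if tr m (a * c) = 0 then (1 : ℤ) else -1)
      = (if tr m (a * c) = 0 then (1 : ℤ) else -1)
        - (if tr m (c⁻¹ + a * c) = 0 then (1 : ℤ) else -1) := by
    intro c hc
    have hc0 : c ≠ 0 := Finset.ne_of_mem_erase hc
    have hcS : c ^ 2 ^ m = c := (Finset.mem_filter.mp (Finset.mem_of_mem_erase hc)).2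
    have hcinv : c⁻¹ ^ 2 ^ m = c⁻¹ := by rw [inv_pow, hcS]
    have hacS : (a * c) ^ 2 ^ m = a * c := by rw [mul_pow, haK, hcS]
    have hcardfib : (U.filter (fun z => z + z⁻¹ = c)).card
        = if tr m c⁻¹ = 0 then 0 else 2 := by
      rw [hUdef, Finset.filter_filter]
      exact Stmt16Aux.fiber_card m hm hF c hcS hc0
    rw [hcardfib, apply_ite (fun n : ℕ => (n : ℤ))]
    simp only [Nat.cast_zero, Nat.cast_ofNat]
    exact Stmt16Aux.point_id (tr m c⁻¹) (tr m (a * c)) (tr m (c⁻¹ + a * c))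
      (Stmt16Aux.tr_mem m c⁻¹ hcinv) (Stmt16Aux.tr_mem m (a * c) hacS)
      (tr_add m c⁻¹ (a * c))
  rw [Finset.sum_congr rfl hterm, Finset.sum_sub_distrib]
  -- first sum: ∑_{c ∈ S.erase 0} χ(tr (a c)) = -1
  have hsum1 : (∑ c ∈ S.erase 0, (if tr m (a * c) = 0 then (1 : ℤ) else -1)) = -1 := by
    have hfull : (∑ c ∈ S, (if tr m (a * c) = 0 then (1 : ℤ) else -1)) = 0 := by
      -- reindex by c ↦ a * c
      have hbij : (∑ c ∈ S, (if tr m (a * c) = 0 then (1 : ℤ) else -1))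
          = ∑ x ∈ S, (if tr m x = 0 then (1 : ℤ) else -1) := by
        apply Finset.sum_nbij' (i := fun c => a * c) (j := fun x => a⁻¹ * x)
        · intro c hc
          refine Finset.mem_filter.mpr ⟨Finset.mem_univ _, ?_⟩
          rw [mul_pow, haK, (Finset.mem_filter.mp hc).2]
        · intro x hx
          refine Finset.mem_filter.mpr ⟨Finset.mem_univ _, ?_⟩
          rw [mul_pow, hainv, (Finset.mem_filter.mp hx).2]
        · intro c hc
          field_simp
        · intro x hx
          field_simp
        · intro c hc
          rfl
      rw [hbij]
      -- count trace-0 and trace-1 elements of S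
      have hP : (S.filter (fun x => tr m x = 0)).card = 2 ^ (m - 1) := by
        rw [hSdef, Finset.filter_filter]
        exact (Stmt16Aux.AS_main m hm hcardS).2
      have hsplit := Finset.card_filter_add_card_filter_not
        (s := S) (p := fun x => tr m x = 0)
      rw [Finset.sum_ite, Finset.sum_const, Finset.sum_const, hP]
      have hQ : (S.filter (fun x => ¬ tr m x = 0)).card = 2 ^ (m - 1) := by
        rw [hP, hcardS] at hsplit
        have h2m : 2 ^ m = 2 ^ (m - 1) + 2 ^ (m - 1) := by
          rw [← two_mul, ← pow_succ']
          congr 1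
          omega
        omega
      rw [hQ]
      simp
    have h0term : (if tr m (a * (0 : F)) = 0 then (1 : ℤ) else -1) = 1 := by
      rw [mul_zero, tr_zero]
      simp
    have this2 : (if tr m (a * (0 : F)) = 0 then (1 : ℤ) else -1)
        + ∑ x ∈ S.erase 0, (if tr m (a * x) = 0 then (1 : ℤ) else -1)
        = ∑ x ∈ S, (if tr m (a * x) = 0 then (1 : ℤ) else -1) :=
      Finset.add_sum_erase S (fun c => if tr m (a * c) = 0 then (1 : ℤ) else -1) h0S
    rw [h0term] at this2
    linarith [this2, hfull]
  rw [hsum1]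
  -- second sum: relate to the Kloosterman sum over S
  have h0term2 : (if tr m ((0 : F)⁻¹ + a * 0) = 0 then (1 : ℤ) else -1) = 1 := by
    rw [inv_zero, mul_zero, add_zero, tr_zero]
    simp
  have hsum2 : (if tr m ((0 : F)⁻¹ + a * 0) = 0 then (1 : ℤ) else -1)
      + ∑ x ∈ S.erase 0, (if tr m (x⁻¹ + a * x) = 0 then (1 : ℤ) else -1)
      = ∑ x ∈ S, (if tr m (x⁻¹ + a * x) = 0 then (1 : ℤ) else -1) :=
    Finset.add_sum_erase S (fun x => if tr m (x⁻¹ + a * x) = 0 then (1 : ℤ) else -1) h0S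
  rw [h0term2] at hsum2
  simp only [if_true]
  refine Eq.trans ?_ (congrArg (fun t => 1 - t) hsum2)
  linarith [hsum2]
end
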